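/- arXiv:0704.0054 — 4 statements merged into one kernel-verified Lean document; each statement's English description precedes it below -/
import Mathlib

section
/- Let n ≥ 1, 0 < p < ∞, 0 < q ≤ ∞, and let (μ_k)_{k∈ℤ} be a nonnegative sequence with (2^k μ_k)_{k∈ℤ} ∈ ℓ^q(ℤ). Let φ : ℝⁿ → [0,∞) be measurable and suppose there exist ε ∈ (0,1) and c > 0 such that for every integer k₀ there are nonnegative measurable functions ψ_{k₀} and η_{k₀} with φ ≤ ψ_{k₀} + η_{k₀} pointwise, ‖ψ_{k₀}‖_{L^∞} ≤ c·2^{k₀}, and 2^{k₀ ε p} · m(η_{k₀}, 2^{k₀}) ≤ c · Σ_{k ≥ k₀} (2^{kε} μ_k)^p. Then φ ∈ L^{p,q}, and there is a constant C, depending only on n, p, q, c, ε, such that ‖φ‖_{p,q} ≤ C · ‖(2^k μ_k)_k‖_{ℓ^q(ℤ)}. -/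
open MeasureTheory ENNReal Set

noncomputable section

abbrev Euc (n : ℕ) := EuclideanSpace ℝ (Fin n)

/-- Distribution function `m(F, lam) = |{x : lam < F x}|` (Lebesgue measure). -/
def distFn {n : ℕ} (F : Euc n → ℝ≥0∞) (lam : ℝ≥0∞) : ℝ≥0∞ :=
  volume {x | lam < F x}

/-- View a real-valued function as an `ℝ≥0∞`-valued one via its absolute value. -/
def eF {n : ℕ} (g : Euc n → ℝ) : Euc n → ℝ≥0∞ :=
  fun x => ENNReal.ofReal |g x|

/-- Dyadic Lorentz `L^{p,q}` quasinorm. -/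
def lorentzNorm {n : ℕ} (p : ℝ) (q : ℝ≥0∞) (F : Euc n → ℝ≥0∞) : ℝ≥0∞ :=
  if q = ∞ then ⨆ k : ℤ, (2 : ℝ≥0∞) ^ k * (distFn F ((2 : ℝ≥0∞) ^ k)) ^ (1/p)
  else (∑' k : ℤ, ((2 : ℝ≥0∞) ^ k * (distFn F ((2 : ℝ≥0∞) ^ k)) ^ (1/p)) ^ q.toReal) ^ (1/q.toReal)

/-- `ℓ^q(ℤ)` norm of a nonnegative sequence. -/
def ellq (q : ℝ≥0∞) (a : ℤ → ℝ≥0∞) : ℝ≥0∞ :=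
  if q = ∞ then ⨆ k : ℤ, a k else (∑' k : ℤ, (a k) ^ q.toReal) ^ (1/q.toReal)

/-- The axis-parallel closed cube centered at `c` with half side-length `r`. -/
def cube {n : ℕ} (c : Euc n) (r : ℝ) : Set (Euc n) := {y | ∀ i, |y i - c i| ≤ r}

/-- `H^p` atom with defining cube `cube c r`; `|cube c r| = (2r)^n`. -/
def IsHpAtom {n : ℕ} (p : ℝ) (a : Euc n → ℝ) (c : Euc n) (r : ℝ) : Prop :=
  0 < r ∧ Measurable a ∧ (∀ x, x ∉ cube c r → a x = 0) ∧
    (∀ᵐ x ∂(volume : Measure (Euc n)), |a x| ≤ ((((2*r)^n : ℝ)) ^ (1/p))⁻¹) ∧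
    ∀ α : Fin n → ℕ, (∑ i, α i) ≤ ⌊(n : ℝ) * (1/p - 1)⌋₊ →
      (∫ y : Euc n, (∏ i, y i ^ α i) * a y) = 0

/-- `(f * ψ_t)(y)` where `ψ_t(x) = t⁻ⁿ ψ(x/t)`. -/
def convAt {n : ℕ} (ψ f : Euc n → ℝ) (t : ℝ) (y : Euc n) : ℝ :=
  ∫ z : Euc n, f z * ((t ^ n)⁻¹ * ψ (t⁻¹ • (y - z)))

/-- Non-tangential maximal function. -/
def ntMax {n : ℕ} (ψ f : Euc n → ℝ) (x : Euc n) : ℝ≥0∞ :=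
  ⨆ (y : Euc n) (t : ℝ) (_ : 0 < t) (_ : dist x y < t), ENNReal.ofReal |convAt ψ f t y|

/-- Radial maximal function. -/
def radMax {n : ℕ} (φ f : Euc n → ℝ) (x : Euc n) : ℝ≥0∞ :=
  ⨆ (t : ℝ) (_ : 0 < t), ENNReal.ofReal |convAt φ f t x|


namespace Stmt0Aux

lemma pow_rpow_comm (x : ℝ≥0∞) (m : ℕ) (r : ℝ) : (x ^ m) ^ r = (x ^ r) ^ m := by
  rw [← ENNReal.rpow_natCast x m, ← ENNReal.rpow_mul, mul_comm, ENNReal.rpow_mul,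
    ENNReal.rpow_natCast]

lemma finset_rpow_le {ι : Type*} (s : Finset ι) (f : ι → ℝ≥0∞) {r : ℝ}
    (hr0 : 0 < r) (hr1 : r ≤ 1) : (∑ i ∈ s, f i) ^ r ≤ ∑ i ∈ s, (f i) ^ r := by
  induction s using Finset.cons_induction with
  | empty => simp [ENNReal.zero_rpow_of_pos hr0]
  | cons a s ha ih =>
    rw [Finset.sum_cons, Finset.sum_cons]
    exact le_trans (ENNReal.rpow_add_le_add_rpow _ _ hr0.le hr1) (by gcongr)

lemma tsum_rpow_le {ι : Type*} (f : ι → ℝ≥0∞) {r : ℝ} (hr0 : 0 < r) (hr1 : r ≤ 1) :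
    (∑' i, f i) ^ r ≤ ∑' i, (f i) ^ r := by
  have h : ∑' i, f i ≤ (∑' i, (f i) ^ r) ^ (1 / r) := by
    rw [ENNReal.tsum_eq_iSup_sum]
    refine iSup_le fun s => ?_
    have h1 : (∑ i ∈ s, f i) ^ r ≤ ∑' i, f i ^ r :=
      (finset_rpow_le s f hr0 hr1).trans (ENNReal.sum_le_tsum s)
    have h2 : ((∑ i ∈ s, f i) ^ r) ^ (1 / r) = ∑ i ∈ s, f i := by
      rw [← ENNReal.rpow_mul, mul_one_div, div_self hr0.ne', ENNReal.rpow_one]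
    rw [← h2]
    exact ENNReal.rpow_le_rpow h1 (by positivity)
  calc (∑' i, f i) ^ r ≤ ((∑' i, (f i) ^ r) ^ (1 / r)) ^ r := ENNReal.rpow_le_rpow h hr0.le
  _ = ∑' i, (f i) ^ r := by
    rw [← ENNReal.rpow_mul, one_div, inv_mul_cancel₀ hr0.ne', ENNReal.rpow_one]

lemma weighted_holder {w : ℝ≥0∞} (hw0 : w ≠ 0) (hwt : w ≠ ∞) (c : ℕ → ℝ≥0∞) {r : ℝ}
    (hr : 1 < r) :
    ∑' m, w ^ m * c m ≤
      (∑' m, w ^ m) ^ (1 - 1 / r) * (∑' m, w ^ m * (c m) ^ r) ^ (1 / r) := by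
  set s : ℝ := r / (r - 1) with hs
  have hr0 : (0:ℝ) < r := lt_trans one_pos hr
  have hpq : s.HolderConjugate r := by
    rw [Real.holderConjugate_iff]
    constructor
    · rw [hs]; rw [lt_div_iff₀ (by linarith)]; linarith
    · rw [hs]; field_simp; ring
  have hwm : ∀ m : ℕ, w ^ m ≠ 0 := fun m => pow_ne_zero m hw0
  have hwmt : ∀ m : ℕ, w ^ m ≠ ∞ := fun m => ENNReal.pow_ne_top hwt
  have key := ENNReal.lintegral_mul_le_Lp_mul_Lq (MeasureTheory.Measure.count (α := ℕ)) hpq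
    (f := fun m => (w ^ m) ^ (1 / s)) (g := fun m => (w ^ m) ^ (1 / r) * c m)
    (measurable_of_countable _).aemeasurable (measurable_of_countable _).aemeasurable
  rw [MeasureTheory.lintegral_count, MeasureTheory.lintegral_count,
    MeasureTheory.lintegral_count] at key
  simp only [Pi.mul_apply] at key
  have e1 : ∀ m : ℕ, (w ^ m) ^ (1 / s) * ((w ^ m) ^ (1 / r) * c m) = w ^ m * c m := by
    intro m
    rw [← mul_assoc, ← ENNReal.rpow_add _ _ (hwm m) (hwmt m)]
    have : 1 / s + 1 / r = 1 := by
      rw [one_div, one_div, hpq.inv_add_inv_eq_one]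
    rw [this, ENNReal.rpow_one]
  have e2 : ∀ m : ℕ, ((w ^ m) ^ (1 / s)) ^ s = w ^ m := by
    intro m
    rw [← ENNReal.rpow_mul, one_div, inv_mul_cancel₀ hpq.ne_zero, ENNReal.rpow_one]
  have e3 : ∀ m : ℕ, ((w ^ m) ^ (1 / r) * c m) ^ r = w ^ m * (c m) ^ r := by
    intro m
    rw [ENNReal.mul_rpow_of_nonneg _ _ hr0.le, ← ENNReal.rpow_mul, one_div,
      inv_mul_cancel₀ hr0.ne', ENNReal.rpow_one]
  simp only [e1, e2, e3] at key
  have e4 : 1 / s = 1 - 1 / r := by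
    rw [hs]; field_simp
  rw [e4] at key
  exact key


lemma shift_tsum (f : ℤ → ℝ≥0∞) (m : ℤ) : ∑' k : ℤ, f (k + m) = ∑' k : ℤ, f k :=
  (Equiv.addRight m).tsum_eq f

/-- The key discrete convolution bound. -/
lemma seq_bound {w : ℝ≥0∞} (hw0 : w ≠ 0) (hw1 : w < 1) {r : ℝ} (hr : 0 < r) :
    ∃ K : ℝ≥0∞, K ≠ ∞ ∧ ∀ a : ℤ → ℝ≥0∞,
      ∑' k₀ : ℤ, (∑' m : ℕ, w ^ m * a (k₀ + m)) ^ r ≤ K * ∑' k : ℤ, a k ^ r := by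
  have hwt : w ≠ ∞ := hw1.ne_top
  rcases le_or_gt r 1 with hr1 | hr1
  · -- case r ≤ 1
    have hwr : w ^ r < 1 := by
      calc w ^ r < 1 ^ r := ENNReal.rpow_lt_rpow hw1 hr
      _ = 1 := ENNReal.one_rpow r
    refine ⟨(1 - w ^ r)⁻¹, ?_, fun a => ?_⟩
    · rw [Ne, ENNReal.inv_eq_top, tsub_eq_zero_iff_le]
      exact fun h => absurd (lt_of_le_of_lt h hwr) (lt_irrefl _)
    have step : ∀ k₀ : ℤ, (∑' m : ℕ, w ^ m * a (k₀ + m)) ^ r ≤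
        ∑' m : ℕ, (w ^ r) ^ m * a (k₀ + m) ^ r := by
      intro k₀
      refine (tsum_rpow_le _ hr hr1).trans_eq (tsum_congr fun m => ?_)
      rw [ENNReal.mul_rpow_of_nonneg _ _ hr.le, pow_rpow_comm]
    calc ∑' k₀ : ℤ, (∑' m : ℕ, w ^ m * a (k₀ + m)) ^ r
        ≤ ∑' k₀ : ℤ, ∑' m : ℕ, (w ^ r) ^ m * a (k₀ + m) ^ r := ENNReal.tsum_le_tsum step
      _ = ∑' m : ℕ, ∑' k₀ : ℤ, (w ^ r) ^ m * a (k₀ + m) ^ r := ENNReal.tsum_comm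
      _ = ∑' m : ℕ, (w ^ r) ^ m * ∑' k : ℤ, a k ^ r := by
          refine tsum_congr fun m => ?_
          rw [ENNReal.tsum_mul_left, shift_tsum (fun k => a k ^ r) m]
      _ = (∑' m : ℕ, (w ^ r) ^ m) * ∑' k : ℤ, a k ^ r := by rw [ENNReal.tsum_mul_right]
      _ = (1 - w ^ r)⁻¹ * ∑' k : ℤ, a k ^ r := by rw [ENNReal.tsum_geometric]
  · -- case r > 1
    have hB : (∑' m : ℕ, w ^ m) = (1 - w)⁻¹ := ENNReal.tsum_geometric w
    have hBt : (∑' m : ℕ, w ^ m) ≠ ∞ := by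
      rw [hB, Ne, ENNReal.inv_eq_top, tsub_eq_zero_iff_le]
      exact fun h => absurd (lt_of_le_of_lt h hw1) (lt_irrefl _)
    have h1r : (0:ℝ) ≤ (1 - 1 / r) * r := by
      have : 1 / r ≤ 1 := by rw [div_le_one (by linarith)]; linarith
      have : (0:ℝ) ≤ 1 - 1 / r := by linarith
      positivity
    refine ⟨((1 - w)⁻¹) ^ ((1 - 1 / r) * r) * (1 - w)⁻¹, ?_, fun a => ?_⟩
    · refine ENNReal.mul_ne_top ?_ (hB ▸ hBt)
      exact (ENNReal.rpow_lt_top_of_nonneg h1r (hB ▸ hBt)).ne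
    have step : ∀ k₀ : ℤ, (∑' m : ℕ, w ^ m * a (k₀ + m)) ^ r ≤
        ((1 - w)⁻¹) ^ ((1 - 1 / r) * r) * ∑' m : ℕ, w ^ m * a (k₀ + m) ^ r := by
      intro k₀
      have h := weighted_holder hw0 hwt (fun m => a (k₀ + m)) hr1
      calc (∑' m : ℕ, w ^ m * a (k₀ + m)) ^ r
          ≤ ((∑' m : ℕ, w ^ m) ^ (1 - 1 / r) *
              (∑' m : ℕ, w ^ m * a (k₀ + m) ^ r) ^ (1 / r)) ^ r :=
            ENNReal.rpow_le_rpow h (by positivity)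
        _ = ((1 - w)⁻¹) ^ ((1 - 1 / r) * r) * ∑' m : ℕ, w ^ m * a (k₀ + m) ^ r := by
            rw [ENNReal.mul_rpow_of_nonneg _ _ (by positivity), ← ENNReal.rpow_mul,
              ← ENNReal.rpow_mul, one_div, inv_mul_cancel₀ (by positivity : r ≠ 0),
              ENNReal.rpow_one, hB]
    calc ∑' k₀ : ℤ, (∑' m : ℕ, w ^ m * a (k₀ + m)) ^ r
        ≤ ∑' k₀ : ℤ, ((1 - w)⁻¹) ^ ((1 - 1 / r) * r) * ∑' m : ℕ, w ^ m * a (k₀ + m) ^ r :=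
          ENNReal.tsum_le_tsum step
      _ = ((1 - w)⁻¹) ^ ((1 - 1 / r) * r) * ∑' k₀ : ℤ, ∑' m : ℕ, w ^ m * a (k₀ + m) ^ r := by
          rw [ENNReal.tsum_mul_left]
      _ = ((1 - w)⁻¹) ^ ((1 - 1 / r) * r) * ∑' m : ℕ, ∑' k₀ : ℤ, w ^ m * a (k₀ + m) ^ r := by
          rw [ENNReal.tsum_comm]
      _ = ((1 - w)⁻¹) ^ ((1 - 1 / r) * r) * ((1 - w)⁻¹ * ∑' k : ℤ, a k ^ r) := by
          congr 1
          calc ∑' m : ℕ, ∑' k₀ : ℤ, w ^ m * a (k₀ + m) ^ r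
              = ∑' m : ℕ, w ^ m * ∑' k : ℤ, a k ^ r := by
                refine tsum_congr fun m => ?_
                rw [ENNReal.tsum_mul_left, shift_tsum (fun k => a k ^ r) m]
            _ = (∑' m : ℕ, w ^ m) * ∑' k : ℤ, a k ^ r := by rw [ENNReal.tsum_mul_right]
            _ = (1 - w)⁻¹ * ∑' k : ℤ, a k ^ r := by rw [hB]
      _ = ((1 - w)⁻¹) ^ ((1 - 1 / r) * r) * (1 - w)⁻¹ * ∑' k : ℤ, a k ^ r := by ring



def natEquiv (k₀ : ℤ) : ℕ ≃ {k : ℤ // k₀ ≤ k} where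
  toFun m := ⟨k₀ + m, by omega⟩
  invFun k := (k.1 - k₀).toNat
  left_inv m := by simp
  right_inv k := by
    ext
    simp only
    omega

end Stmt0Aux

/-- Lemma 1.1. -/
theorem stmt0 (n : ℕ) (hn : 1 ≤ n) (p : ℝ) (hp : 0 < p) (q : ℝ≥0∞) (hq : 0 < q)
    (ε c : ℝ) (hε0 : 0 < ε) (hε1 : ε < 1) (hc : 0 < c) :
    ∃ C : ℝ, 0 < C ∧
      ∀ (μ : ℤ → ℝ) (φ : Euc n → ℝ),
        (∀ k, 0 ≤ μ k) →
        ellq q (fun k => ENNReal.ofReal ((2:ℝ) ^ k * μ k)) < ∞ →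
        Measurable φ → (∀ x, 0 ≤ φ x) →
        (∀ k₀ : ℤ, ∃ ψ η : Euc n → ℝ, Measurable ψ ∧ Measurable η ∧
          (∀ x, 0 ≤ ψ x) ∧ (∀ x, 0 ≤ η x) ∧ (∀ x, φ x ≤ ψ x + η x) ∧
          (∀ᵐ x ∂(volume : Measure (Euc n)), ψ x ≤ c * (2:ℝ) ^ k₀) ∧
          ENNReal.ofReal ((2:ℝ) ^ ((k₀ : ℝ) * ε * p)) * distFn (eF η) ((2 : ℝ≥0∞) ^ k₀) ≤
            ENNReal.ofReal c *
              ∑' k : {k : ℤ // k₀ ≤ k},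
                ENNReal.ofReal (((2:ℝ) ^ (((k : ℤ) : ℝ) * ε) * μ (k : ℤ)) ^ p)) →
        lorentzNorm p q (eF φ) < ∞ ∧
          lorentzNorm p q (eF φ) ≤
            ENNReal.ofReal C * ellq q (fun k => ENNReal.ofReal ((2:ℝ) ^ k * μ k)) := by
  classical
  open Stmt0Aux in
  -- basic constants
  have h2t : (2 : ℝ≥0∞) ≠ ∞ := by simp
  have h20 : (2 : ℝ≥0∞) ≠ 0 := by simp
  set δ : ℝ := (1 - ε) / 2 with hδdef
  have hδ : 0 < δ := by rw [hδdef]; linarith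
  obtain ⟨M, hM⟩ := pow_unbounded_of_one_lt (R := ℝ) (c + 1) one_lt_two
  -- powers of two as a function of a real exponent
  set E : ℝ → ℝ≥0∞ := fun t => (2 : ℝ≥0∞) ^ t with hEdef
  have hE2 : ∀ s t : ℝ, E (s + t) = E s * E t := fun s t => ENNReal.rpow_add s t h20 h2t
  have hEofReal : ∀ t : ℝ, E t = ENNReal.ofReal ((2:ℝ) ^ t) := by
    intro t
    show (2:ℝ≥0∞) ^ t = _
    rw [← ENNReal.ofReal_rpow_of_pos (by norm_num : (0:ℝ) < 2), ENNReal.ofReal_ofNat]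
  have hzE : ∀ k : ℤ, (2 : ℝ≥0∞) ^ k = E (k : ℝ) := fun k => (ENNReal.rpow_intCast 2 k).symm
  have hE0 : ∀ t : ℝ, E t ≠ 0 := fun t => (ENNReal.rpow_pos (by norm_num) h2t).ne'
  have hEt : ∀ t : ℝ, E t ≠ ∞ := fun t => by
    rw [hEofReal]; exact ENNReal.ofReal_ne_top
  set w : ℝ≥0∞ := E (-δ) with hwdef
  have hw1 : w < 1 := by
    have : E (-δ) < E 0 :=
      ENNReal.rpow_lt_rpow_of_exponent_lt (by norm_num) h2t (by linarith)
    simpa [hEdef] using this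
  have hw0 : w ≠ 0 := hE0 _
  have hwm : ∀ m : ℕ, w ^ m = E (-(m * δ)) := by
    intro m
    rw [hwdef, hEdef]
    rw [← ENNReal.rpow_natCast ((2:ℝ≥0∞) ^ (-δ)) m, ← ENNReal.rpow_mul]
    ring_nf
  have hwp1 : w ^ p < 1 := by
    calc w ^ p < 1 ^ p := ENNReal.rpow_lt_rpow hw1 hp
    _ = 1 := ENNReal.one_rpow p
  set Bp : ℝ≥0∞ := (1 - w ^ p)⁻¹ with hBpdef
  have hBpt : Bp ≠ ∞ := by
    rw [hBpdef, Ne, ENNReal.inv_eq_top, tsub_eq_zero_iff_le]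
    exact fun h => absurd (lt_of_le_of_lt h hwp1) (lt_irrefl _)
  set C₃ : ℝ≥0∞ := (2:ℝ≥0∞) ^ (M:ℕ) * (ENNReal.ofReal c) ^ (1/p) * Bp ^ (1/p) with hC₃def
  have hC₃t : C₃ ≠ ∞ := by
    refine ENNReal.mul_ne_top (ENNReal.mul_ne_top ?_ ?_) ?_
    · exact ENNReal.pow_ne_top h2t
    · exact (ENNReal.rpow_lt_top_of_nonneg (by positivity) ENNReal.ofReal_ne_top).ne
    · exact (ENNReal.rpow_lt_top_of_nonneg (by positivity) hBpt).ne
  -- notation for the sequence and its smoothed version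
  set a : (ℤ → ℝ) → ℤ → ℝ≥0∞ := fun μ k => ENNReal.ofReal ((2:ℝ) ^ k * μ k) with hadef
  set V : (ℤ → ℝ) → ℤ → ℝ≥0∞ := fun μ k₀ => ∑' m : ℕ, w ^ m * a μ (k₀ + m) with hVdef
  -- the key pointwise estimate
  have key : ∀ (μ : ℤ → ℝ) (φ : Euc n → ℝ), (∀ k, 0 ≤ μ k) → (∀ x, 0 ≤ φ x) →
      (∀ k₀ : ℤ, ∃ ψ η : Euc n → ℝ, Measurable ψ ∧ Measurable η ∧
          (∀ x, 0 ≤ ψ x) ∧ (∀ x, 0 ≤ η x) ∧ (∀ x, φ x ≤ ψ x + η x) ∧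
          (∀ᵐ x ∂(volume : Measure (Euc n)), ψ x ≤ c * (2:ℝ) ^ k₀) ∧
          ENNReal.ofReal ((2:ℝ) ^ ((k₀ : ℝ) * ε * p)) * distFn (eF η) ((2 : ℝ≥0∞) ^ k₀) ≤
            ENNReal.ofReal c *
              ∑' k : {k : ℤ // k₀ ≤ k},
                ENNReal.ofReal (((2:ℝ) ^ (((k : ℤ) : ℝ) * ε) * μ (k : ℤ)) ^ p)) →
      ∀ j : ℤ,
        (2:ℝ≥0∞) ^ j * (distFn (eF φ) ((2:ℝ≥0∞) ^ j)) ^ (1/p) ≤ C₃ * V μ (j - M) := by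
    intro μ φ hμ hφ0 hdec j
    set k₀ : ℤ := j - M with hk₀def
    have hjk : j = k₀ + M := by omega
    obtain ⟨ψ, η, hψm, hηm, hψ0, hη0, hφle, hψae, hk⟩ := hdec k₀
    -- Step 1 : distribution function estimate for φ via η
    have h1 : distFn (eF φ) ((2:ℝ≥0∞) ^ j) ≤ distFn (eF η) ((2:ℝ≥0∞) ^ k₀) := by
      have hnull : volume {x : Euc n | ¬ ψ x ≤ c * (2:ℝ) ^ k₀} = 0 := hψae
      have hsubset : {x : Euc n | (2:ℝ≥0∞) ^ j < eF φ x} ⊆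
          {x : Euc n | ¬ ψ x ≤ c * (2:ℝ) ^ k₀} ∪ {x : Euc n | (2:ℝ≥0∞) ^ k₀ < eF η x} := by
        intro x hx
        simp only [Set.mem_setOf_eq, Set.mem_union]
        by_contra hcon
        push_neg at hcon
        obtain ⟨hψx, hηx⟩ := hcon
        have hηreal : η x ≤ (2:ℝ) ^ k₀ := by
          have h' := hηx
          rw [eF, abs_of_nonneg (hη0 x), hzE, hEofReal, Real.rpow_intCast] at h'
          exact (ENNReal.ofReal_le_ofReal_iff (by positivity)).1 h'
        have hφx : φ x ≤ (2:ℝ) ^ j := by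
          have h2M : c + 1 ≤ (2:ℝ) ^ (M:ℤ) := by
            rw [zpow_natCast]; linarith
          have : φ x ≤ (c + 1) * (2:ℝ) ^ k₀ := by
            have := hφle x
            nlinarith [hψx, hηreal, zpow_pos (by norm_num : (0:ℝ) < 2) k₀]
          calc φ x ≤ (c+1) * (2:ℝ) ^ k₀ := this
          _ ≤ (2:ℝ) ^ (M:ℤ) * (2:ℝ) ^ k₀ := by
              have := zpow_pos (by norm_num : (0:ℝ) < 2) k₀
              nlinarith
          _ = (2:ℝ) ^ j := by rw [← zpow_add₀ (by norm_num : (2:ℝ) ≠ 0), hjk]; ring_nf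
        have : eF φ x ≤ (2:ℝ≥0∞) ^ j := by
          rw [eF, abs_of_nonneg (hφ0 x), hzE, hEofReal, Real.rpow_intCast]
          exact ENNReal.ofReal_le_ofReal hφx
        rw [Set.mem_setOf_eq] at hx
        exact absurd hx (not_lt.2 this)
      calc distFn (eF φ) ((2:ℝ≥0∞) ^ j)
          ≤ volume ({x : Euc n | ¬ ψ x ≤ c * (2:ℝ) ^ k₀} ∪
              {x : Euc n | (2:ℝ≥0∞) ^ k₀ < eF η x}) := measure_mono hsubset
        _ ≤ volume {x : Euc n | ¬ ψ x ≤ c * (2:ℝ) ^ k₀} +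
              volume {x : Euc n | (2:ℝ≥0∞) ^ k₀ < eF η x} := measure_union_le _ _
        _ = distFn (eF η) ((2:ℝ≥0∞) ^ k₀) := by rw [hnull, zero_add]; rfl
    -- Step 2 : bound the tail sum termwise
    have hVle : ∀ m : ℕ, w ^ m * a μ (k₀ + m) ≤ V μ k₀ := fun m => ENNReal.le_tsum m
    have hSsub : (∑' k : {k : ℤ // k₀ ≤ k},
          ENNReal.ofReal (((2:ℝ) ^ (((k : ℤ) : ℝ) * ε) * μ (k : ℤ)) ^ p)) ≤
        E ((k₀:ℝ) * (ε-1) * p) * (Bp * (V μ k₀) ^ p) := by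
      rw [← (natEquiv k₀).tsum_eq]
      have hterm : ∀ m : ℕ,
          ENNReal.ofReal (((2:ℝ) ^ ((((k₀ + m : ℤ)) : ℝ) * ε) * μ (k₀ + m)) ^ p) ≤
            E ((k₀:ℝ) * (ε-1) * p) * ((w ^ p) ^ m * (V μ k₀) ^ p) := by
        intro m
        have hx : (((k₀ + m : ℤ)) : ℝ) = (k₀ : ℝ) + m := by push_cast; ring
        have hXsplit : (2:ℝ) ^ ((((k₀ + m : ℤ)) : ℝ) * ε) * μ (k₀ + m) =
            (2:ℝ) ^ (((k₀:ℝ) + m) * (ε - 1)) * ((2:ℝ) ^ (k₀ + m : ℤ) * μ (k₀ + m)) := by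
          rw [← Real.rpow_intCast (2:ℝ) (k₀ + m), hx, ← mul_assoc,
            ← Real.rpow_add (by norm_num : (0:ℝ) < 2)]
          ring_nf
        have hofReal : ENNReal.ofReal ((2:ℝ) ^ ((((k₀ + m : ℤ)) : ℝ) * ε) * μ (k₀ + m)) =
            E (((k₀:ℝ) + m) * (ε - 1)) * a μ (k₀ + m) := by
          rw [hXsplit, ENNReal.ofReal_mul (by positivity), ← hEofReal, hadef]
        have hEsplit : E (((k₀:ℝ) + m) * (ε - 1)) = E ((k₀:ℝ) * (ε-1)) * (w ^ m * w ^ m) := by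
          have : ((k₀:ℝ) + m) * (ε - 1) = (k₀:ℝ) * (ε-1) + (-(m * δ) + -(m * δ)) := by
            rw [hδdef]; ring
          rw [this, hE2, hE2, hwm]
        calc ENNReal.ofReal (((2:ℝ) ^ ((((k₀ + m : ℤ)) : ℝ) * ε) * μ (k₀ + m)) ^ p)
            = (ENNReal.ofReal ((2:ℝ) ^ ((((k₀ + m : ℤ)) : ℝ) * ε) * μ (k₀ + m))) ^ p := by
              rw [ENNReal.ofReal_rpow_of_nonneg (mul_nonneg (by positivity) (hμ _)) hp.le]
          _ = (E ((k₀:ℝ) * (ε-1)) * w ^ m * (w ^ m * a μ (k₀ + m))) ^ p := by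
              rw [hofReal, hEsplit]; ring_nf
          _ ≤ (E ((k₀:ℝ) * (ε-1)) * w ^ m * V μ k₀) ^ p := by
              gcongr
              exact hVle m
          _ = E ((k₀:ℝ) * (ε-1) * p) * ((w ^ p) ^ m * (V μ k₀) ^ p) := by
              rw [ENNReal.mul_rpow_of_nonneg _ _ hp.le, ENNReal.mul_rpow_of_nonneg _ _ hp.le,
                pow_rpow_comm, hEdef, ← ENNReal.rpow_mul, mul_assoc]
      refine le_trans (ENNReal.tsum_le_tsum (fun m => hterm m)) (le_of_eq ?_)
      rw [ENNReal.tsum_mul_left, ENNReal.tsum_mul_right, ENNReal.tsum_geometric, hBpdef]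
    -- Step 2' : divide by the weight
    have h2 : distFn (eF η) ((2:ℝ≥0∞) ^ k₀) ≤
        ENNReal.ofReal c * E (-(k₀:ℝ) * p) * (Bp * (V μ k₀) ^ p) := by
      have hk' : E ((k₀:ℝ) * ε * p) * distFn (eF η) ((2:ℝ≥0∞) ^ k₀) ≤
          ENNReal.ofReal c * (E ((k₀:ℝ) * (ε-1) * p) * (Bp * (V μ k₀) ^ p)) := by
        rw [hEofReal]
        exact hk.trans (by gcongr)
      have := mul_le_mul_right hk' (E (-((k₀:ℝ) * ε * p)))
      rw [← mul_assoc, ← hE2, neg_add_cancel] at this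
      have hE0' : E 0 = 1 := by simp [hEdef]
      rw [hE0', one_mul] at this
      refine this.trans (le_of_eq ?_)
      rw [← mul_assoc, ← mul_assoc, mul_comm (E (-((k₀:ℝ) * ε * p))) (ENNReal.ofReal c),
        mul_assoc (ENNReal.ofReal c), ← hE2]
      ring_nf
    -- Step 3 : conclude
    calc (2:ℝ≥0∞) ^ j * (distFn (eF φ) ((2:ℝ≥0∞) ^ j)) ^ (1/p)
        ≤ (2:ℝ≥0∞) ^ j *
            (ENNReal.ofReal c * E (-(k₀:ℝ) * p) * (Bp * (V μ k₀) ^ p)) ^ (1/p) := by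
          gcongr
          exact h1.trans h2
      _ = C₃ * V μ k₀ := by
          rw [hzE, ENNReal.mul_rpow_of_nonneg _ _ (by positivity),
            ENNReal.mul_rpow_of_nonneg _ _ (by positivity),
            ENNReal.mul_rpow_of_nonneg _ _ (by positivity)]
          have e1 : (E (-(k₀:ℝ) * p)) ^ (1/p) = E (-(k₀:ℝ)) := by
            rw [hEdef, ← ENNReal.rpow_mul]
            congr 1
            field_simp
          have e2 : ((V μ k₀) ^ p) ^ (1/p) = V μ k₀ := by
            rw [← ENNReal.rpow_mul, mul_one_div, div_self hp.ne', ENNReal.rpow_one]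
          rw [e1, e2, hC₃def]
          have e3 : E (j:ℝ) * E (-(k₀:ℝ)) = (2:ℝ≥0∞) ^ (M:ℕ) := by
            rw [← hE2]
            have : (j:ℝ) + -(k₀:ℝ) = ((M:ℕ):ℝ) := by
              have : (j:ℝ) = (k₀:ℝ) + (M:ℕ) := by rw [hjk]; push_cast; ring
              rw [this]; ring
            rw [this]
            show (2:ℝ≥0∞) ^ (((M:ℕ)):ℝ) = _
            exact ENNReal.rpow_natCast 2 M
          calc E (j:ℝ) * (ENNReal.ofReal c ^ (1/p) * E (-(k₀:ℝ)) * (Bp ^ (1/p) * V μ k₀))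
              = (E (j:ℝ) * E (-(k₀:ℝ))) * ENNReal.ofReal c ^ (1/p) * Bp ^ (1/p) * V μ k₀ := by
                ring
            _ = (2:ℝ≥0∞) ^ (M:ℕ) * ENNReal.ofReal c ^ (1/p) * Bp ^ (1/p) * V μ k₀ := by
                rw [e3]
  -- final assembly
  rcases eq_or_ne q ∞ with hqt | hqt
  · -- case q = ∞
    have hwt1 : (1 : ℝ≥0∞) - w ≠ 0 := by
      rw [Ne, tsub_eq_zero_iff_le]
      exact fun h => absurd (lt_of_le_of_lt h hw1) (lt_irrefl _)
    set CE : ℝ≥0∞ := C₃ * (1 - w)⁻¹ with hCEdef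
    have hCEt : CE ≠ ∞ := ENNReal.mul_ne_top hC₃t (ENNReal.inv_ne_top.2 hwt1)
    refine ⟨CE.toReal + 1, by positivity, ?_⟩
    intro μ φ hμ helq hφm hφ0 hdec
    have hCE : CE ≤ ENNReal.ofReal (CE.toReal + 1) := by
      conv_lhs => rw [← ENNReal.ofReal_toReal hCEt]
      exact ENNReal.ofReal_le_ofReal (by linarith)
    have hbound : lorentzNorm p q (eF φ) ≤
        CE * ellq q (fun k => ENNReal.ofReal ((2:ℝ) ^ k * μ k)) := by
      simp only [lorentzNorm, ellq, hqt, if_pos]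
      refine iSup_le fun j => ?_
      refine (key μ φ hμ hφ0 hdec j).trans ?_
      have hV : V μ (j - M) ≤ (1 - w)⁻¹ * ⨆ k : ℤ, a μ k := by
        calc V μ (j - M) ≤ ∑' m : ℕ, w ^ m * ⨆ k : ℤ, a μ k := by
              refine ENNReal.tsum_le_tsum fun m => ?_
              exact mul_le_mul_right (le_iSup (fun k => a μ k) _) _
          _ = (∑' m : ℕ, w ^ m) * ⨆ k : ℤ, a μ k := ENNReal.tsum_mul_right
          _ = (1 - w)⁻¹ * ⨆ k : ℤ, a μ k := by rw [ENNReal.tsum_geometric]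
      calc C₃ * V μ (j - M) ≤ C₃ * ((1 - w)⁻¹ * ⨆ k : ℤ, a μ k) := mul_le_mul_right hV _
        _ = CE * ⨆ k : ℤ, a μ k := by rw [hCEdef]; ring
    have hfin : ellq q (fun k => ENNReal.ofReal ((2:ℝ) ^ k * μ k)) < ∞ := helq
    refine ⟨lt_of_le_of_lt hbound (ENNReal.mul_lt_top hCEt.lt_top hfin), ?_⟩
    exact hbound.trans (mul_le_mul_left hCE _)
  · -- case q ≠ ∞
    have hr : 0 < q.toReal := ENNReal.toReal_pos hq.ne' hqt
    obtain ⟨K, hKt, hK⟩ := Stmt0Aux.seq_bound hw0 hw1 hr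
    set CE : ℝ≥0∞ := C₃ * K ^ (1 / q.toReal) with hCEdef
    have hCEt : CE ≠ ∞ :=
      ENNReal.mul_ne_top hC₃t (ENNReal.rpow_lt_top_of_nonneg (by positivity) hKt).ne
    refine ⟨CE.toReal + 1, by positivity, ?_⟩
    intro μ φ hμ helq hφm hφ0 hdec
    have hCE : CE ≤ ENNReal.ofReal (CE.toReal + 1) := by
      conv_lhs => rw [← ENNReal.ofReal_toReal hCEt]
      exact ENNReal.ofReal_le_ofReal (by linarith)
    have hbound : lorentzNorm p q (eF φ) ≤
        CE * ellq q (fun k => ENNReal.ofReal ((2:ℝ) ^ k * μ k)) := by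
      simp only [lorentzNorm, ellq, if_neg hqt]
      calc (∑' j : ℤ, ((2:ℝ≥0∞) ^ j * (distFn (eF φ) ((2:ℝ≥0∞) ^ j)) ^ (1/p)) ^ q.toReal)
              ^ (1/q.toReal)
          ≤ (∑' j : ℤ, (C₃ * V μ (j - M)) ^ q.toReal) ^ (1/q.toReal) := by
            refine ENNReal.rpow_le_rpow (ENNReal.tsum_le_tsum fun j => ?_) (by positivity)
            exact ENNReal.rpow_le_rpow (key μ φ hμ hφ0 hdec j) hr.le
        _ = (C₃ ^ q.toReal * ∑' j : ℤ, (V μ (j - M)) ^ q.toReal) ^ (1/q.toReal) := by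
            congr 1
            rw [← ENNReal.tsum_mul_left]
            exact tsum_congr fun j => ENNReal.mul_rpow_of_nonneg _ _ hr.le
        _ = (C₃ ^ q.toReal * ∑' k : ℤ, (V μ k) ^ q.toReal) ^ (1/q.toReal) := by
            congr 2
            exact (Equiv.subRight (M:ℤ)).tsum_eq (fun k => (V μ k) ^ q.toReal)
        _ ≤ (C₃ ^ q.toReal * (K * ∑' k : ℤ, (a μ k) ^ q.toReal)) ^ (1/q.toReal) := by
            gcongr
            exact hK (a μ)
        _ = CE * (∑' k : ℤ, (a μ k) ^ q.toReal) ^ (1/q.toReal) := by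
            rw [ENNReal.mul_rpow_of_nonneg _ _ (by positivity : (0:ℝ) ≤ 1/q.toReal),
              ENNReal.mul_rpow_of_nonneg _ _ (by positivity : (0:ℝ) ≤ 1/q.toReal)]
            have h1 : (C₃ ^ q.toReal) ^ (1/q.toReal) = C₃ := by
              rw [← ENNReal.rpow_mul, mul_one_div, div_self hr.ne', ENNReal.rpow_one]
            rw [h1, hCEdef]
            ring
    have hfin : ellq q (fun k => ENNReal.ofReal ((2:ℝ) ^ k * μ k)) < ∞ := helq
    refine ⟨lt_of_le_of_lt hbound (ENNReal.mul_lt_top hCEt.lt_top hfin), ?_⟩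
    exact hbound.trans (mul_le_mul_left hCE _)


end
end

section
/- Let n ≥ 1, 0 < p < ∞, 0 < q ≤ ∞, and let (μ_k)_{k∈ℤ} be a nonnegative sequence with (2^k μ_k)_{k∈ℤ} ∈ ℓ^q(ℤ). Let φ : ℝⁿ → [0,∞) be measurable and suppose there exist ε ∈ (0,1) and c > 0 such that for every integer k₀ there are nonnegative measurable functions ψ_{k₀} and η_{k₀} with φ ≤ ψ_{k₀} + η_{k₀} pointwise, m(ψ_{k₀}, 2^{k₀})^{1/p} ≤ c · μ_{k₀}, and 2^{k₀ ε p} · m(η_{k₀}, 2^{k₀}) ≤ c · Σ_{k ≥ k₀} (2^{kε} μ_k)^p. Then φ ∈ L^{p,q}, and there is a constant C, depending only on n, p, q, c, ε, such that ‖φ‖_{p,q} ≤ C · ‖(2^k μ_k)_k‖_{ℓ^q(ℤ)}. -/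
open MeasureTheory ENNReal Set

noncomputable section

namespace StmtAux

lemma two_rpow_ne_top (t : ℝ) : (2:ℝ≥0∞) ^ t ≠ ⊤ := by
  simp [ENNReal.rpow_eq_top_iff]

lemma two_rpow_ne_zero (t : ℝ) : (2:ℝ≥0∞) ^ t ≠ 0 := by
  simp [ENNReal.rpow_eq_zero_iff]

lemma two_rpow_add (s t : ℝ) : (2:ℝ≥0∞) ^ (s+t) = 2 ^ s * 2 ^ t :=
  ENNReal.rpow_add _ _ two_ne_zero ENNReal.ofNat_ne_top

lemma ofReal_two_rpow (t : ℝ) : ENNReal.ofReal ((2:ℝ) ^ t) = (2:ℝ≥0∞) ^ t := by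
  rw [← ENNReal.ofReal_rpow_of_pos two_pos, ENNReal.ofReal_ofNat]

lemma two_pow_geom (γ : ℝ) (j : ℕ) :
    (2:ℝ≥0∞) ^ (-(j:ℝ)*γ) = ((2:ℝ≥0∞) ^ (-γ)) ^ j := by
  rw [← ENNReal.rpow_natCast ((2:ℝ≥0∞) ^ (-γ)) j, ← ENNReal.rpow_mul]
  congr 1; ring

lemma two_rpow_lt_one {t : ℝ} (ht : t < 0) : (2:ℝ≥0∞) ^ t < 1 := by
  rw [show t = -(-t) by ring, ENNReal.rpow_neg, ENNReal.inv_lt_one]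
  exact ENNReal.one_lt_rpow one_lt_two (by linarith)

lemma rpow_two_add_le {s : ℝ} (hs : 0 ≤ s) (x y : ℝ≥0∞) :
    (x + y) ^ s ≤ (2:ℝ≥0∞) ^ s * (x ^ s + y ^ s) := by
  rcases le_total x y with h | h
  · refine le_trans (ENNReal.rpow_le_rpow
      (show x + y ≤ 2*y by rw [two_mul]; exact add_le_add_left h y) hs) ?_
    rw [ENNReal.mul_rpow_of_nonneg _ _ hs]
    exact mul_le_mul_right le_add_self _
  · refine le_trans (ENNReal.rpow_le_rpow
      (show x + y ≤ 2*x by rw [two_mul]; exact add_le_add_right h x) hs) ?_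
    rw [ENNReal.mul_rpow_of_nonneg _ _ hs]
    exact mul_le_mul_right le_self_add _

lemma tsum_rpow_le {ι : Type*} (f : ι → ℝ≥0∞) {s : ℝ} (hs0 : 0 < s) (hs1 : s ≤ 1) :
    (∑' i, f i) ^ s ≤ ∑' i, (f i) ^ s := by
  have hfin : ∀ F : Finset ι, (∑ i ∈ F, f i) ^ s ≤ ∑ i ∈ F, (f i) ^ s := by
    intro F
    induction F using Finset.cons_induction with
    | empty => simp [ENNReal.zero_rpow_of_pos hs0]
    | cons a F ha ih =>
      rw [Finset.sum_cons, Finset.sum_cons]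
      exact (ENNReal.rpow_add_le_add_rpow _ _ hs0.le hs1).trans (add_le_add_right ih _)
  rw [← ENNReal.le_rpow_inv_iff hs0, ENNReal.tsum_eq_iSup_sum]
  refine iSup_le fun F => ?_
  rw [ENNReal.le_rpow_inv_iff hs0]
  exact (hfin F).trans (ENNReal.sum_le_tsum F)

lemma tsum_holder {s t : ℝ} (hst : s.HolderConjugate t) (u v : ℕ → ℝ≥0∞) :
    ∑' j, u j * v j ≤ (∑' j, u j ^ s) ^ (1/s) * (∑' j, v j ^ t) ^ (1/t) := by
  have h := ENNReal.lintegral_mul_le_Lp_mul_Lq (MeasureTheory.Measure.count (α := ℕ)) hst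
    (f := u) (g := v) measurable_from_top.aemeasurable measurable_from_top.aemeasurable
  simpa [MeasureTheory.lintegral_count] using h

lemma geom_ne_top {t : ℝ≥0∞} (ht : t < 1) : (∑' j : ℕ, t ^ j) ≠ ⊤ := by
  rw [ENNReal.tsum_geometric, Ne, ENNReal.inv_eq_top, tsub_eq_zero_iff_le]
  exact not_le_of_gt ht

lemma double_sum (c : ℕ → ℝ≥0∞) (w : ℤ → ℝ≥0∞) :
    ∑' k : ℤ, ∑' j : ℕ, c j * w (k + (j:ℤ)) = (∑' j, c j) * ∑' k, w k := by
  rw [ENNReal.tsum_comm]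
  calc ∑' (j:ℕ), ∑' (k:ℤ), c j * w (k + (j:ℤ))
      = ∑' (j:ℕ), c j * ∑' (k:ℤ), w (k + (j:ℤ)) := by
        simp_rw [ENNReal.tsum_mul_left]
    _ = ∑' (j:ℕ), c j * ∑' k, w k := by
        refine tsum_congr fun j => ?_
        congr 1
        exact Equiv.tsum_eq (Equiv.addRight (j:ℤ)) w
    _ = _ := ENNReal.tsum_mul_right

lemma ellq_mono {q : ℝ≥0∞} {f g : ℤ → ℝ≥0∞} (h : ∀ k, f k ≤ g k) : ellq q f ≤ ellq q g := by
  unfold ellq; split_ifs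
  · exact iSup_mono h
  · exact ENNReal.rpow_le_rpow
      (ENNReal.tsum_le_tsum fun k => ENNReal.rpow_le_rpow (h k) ENNReal.toReal_nonneg)
      (by positivity)

lemma ellq_shift (q : ℝ≥0∞) (f : ℤ → ℝ≥0∞) (j : ℤ) :
    ellq q (fun k => f (k + j)) = ellq q f := by
  unfold ellq; split_ifs
  · exact Equiv.iSup_comp (g := f) (Equiv.addRight j)
  · congr 1
    exact Equiv.tsum_eq (Equiv.addRight j) (fun k => f k ^ q.toReal)

lemma ellq_const_mul (q : ℝ≥0∞) (hq0 : q ≠ 0) (K : ℝ≥0∞) (f : ℤ → ℝ≥0∞) :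
    ellq q (fun k => K * f k) = K * ellq q f := by
  unfold ellq; split_ifs with h
  · exact (ENNReal.mul_iSup K f).symm
  · have ht : 0 < q.toReal := ENNReal.toReal_pos hq0 h
    simp_rw [ENNReal.mul_rpow_of_nonneg _ _ ht.le]
    rw [ENNReal.tsum_mul_left, ENNReal.mul_rpow_of_nonneg _ _ (by positivity),
      ← ENNReal.rpow_mul, mul_one_div_cancel ht.ne', ENNReal.rpow_one]

lemma ellq_add_le (q : ℝ≥0∞) (hq0 : q ≠ 0) (f g : ℤ → ℝ≥0∞) :
    ellq q (fun k => f k + g k) ≤ (2:ℝ≥0∞) ^ (1 + 1/q.toReal) * (ellq q f + ellq q g) := by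
  have h2 : (1:ℝ≥0∞) ≤ (2:ℝ≥0∞) ^ (1 + 1/q.toReal) := by
    refine (ENNReal.one_lt_rpow one_lt_two ?_).le
    have : 0 ≤ 1/q.toReal := by positivity
    linarith
  unfold ellq; split_ifs with h
  · refine le_trans (iSup_le fun k => add_le_add (le_iSup f k) (le_iSup g k)) ?_
    exact le_mul_of_one_le_left zero_le h2
  · have ht : 0 < q.toReal := ENNReal.toReal_pos hq0 h
    calc (∑' k, (f k + g k) ^ q.toReal) ^ (1/q.toReal)
        ≤ (∑' k, (2:ℝ≥0∞)^q.toReal * ((f k)^q.toReal + (g k)^q.toReal)) ^ (1/q.toReal) := by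
          gcongr with k
          exact rpow_two_add_le ht.le _ _
      _ = ((2:ℝ≥0∞)^q.toReal * ((∑' k, (f k)^q.toReal) + ∑' k, (g k)^q.toReal)) ^ (1/q.toReal) := by
          rw [ENNReal.tsum_mul_left, ENNReal.tsum_add]
      _ = (2:ℝ≥0∞)^(q.toReal * (1/q.toReal)) *
            ((∑' k, (f k)^q.toReal) + ∑' k, (g k)^q.toReal) ^ (1/q.toReal) := by
          rw [ENNReal.rpow_mul, ENNReal.mul_rpow_of_nonneg _ _ (by positivity)]
      _ ≤ (2:ℝ≥0∞)^(q.toReal * (1/q.toReal)) *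
            ((2:ℝ≥0∞)^(1/q.toReal) *
              ((∑' k, (f k)^q.toReal)^(1/q.toReal) + (∑' k, (g k)^q.toReal)^(1/q.toReal))) := by
          gcongr
          exact rpow_two_add_le (by positivity) _ _
      _ = _ := by
          rw [mul_one_div_cancel ht.ne', two_rpow_add 1 (1/q.toReal), mul_assoc]

def TSeq (p δ : ℝ) (a : ℤ → ℝ≥0∞) : ℤ → ℝ≥0∞ :=
  fun k => (∑' j : ℕ, ((2:ℝ≥0∞) ^ (-(j:ℝ)*δ) * a (k + (j:ℤ))) ^ p) ^ (1/p)

lemma Tbound {p : ℝ} (hp : 0 < p) (q : ℝ≥0∞) (hq0 : q ≠ 0) {δ : ℝ} (hδ : 0 < δ) :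
    ∃ G : ℝ≥0∞, G ≠ ⊤ ∧ ∀ a : ℤ → ℝ≥0∞, ellq q (TSeq p δ a) ≤ G * ellq q a := by
  have hp' : (0:ℝ) ≤ 1/p := one_div_nonneg.mpr hp.le
  by_cases hqt : q = ⊤
  · refine ⟨(∑' j:ℕ, ((2:ℝ≥0∞) ^ (-(δ*p)))^j)^(1/p),
      ENNReal.rpow_ne_top_of_nonneg hp'
        (geom_ne_top (two_rpow_lt_one (by nlinarith))), fun a => ?_⟩
    subst hqt
    rw [show ellq ⊤ (TSeq p δ a) = ⨆ k, TSeq p δ a k from if_pos rfl,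
      show ellq ⊤ a = ⨆ k, a k from if_pos rfl]
    refine iSup_le fun k => ?_
    calc TSeq p δ a k
        ≤ (∑' j:ℕ, ((2:ℝ≥0∞)^(-(j:ℝ)*δ) * ⨆ m, a m)^p)^(1/p) := by
          refine ENNReal.rpow_le_rpow (ENNReal.tsum_le_tsum fun j =>
            ENNReal.rpow_le_rpow (mul_le_mul_right (le_iSup a _) _) hp.le) hp'
      _ = (∑' j:ℕ, ((2:ℝ≥0∞) ^ (-(δ*p)))^j * (⨆ m, a m)^p)^(1/p) := by
          refine congrArg (· ^ (1/p)) (tsum_congr fun j => ?_)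
          rw [ENNReal.mul_rpow_of_nonneg _ _ hp.le, ← ENNReal.rpow_mul,
            show -(j:ℝ)*δ*p = -(j:ℝ)*(δ*p) by ring, two_pow_geom]
      _ = ((∑' j:ℕ, ((2:ℝ≥0∞) ^ (-(δ*p)))^j) * (⨆ m, a m)^p)^(1/p) := by
          rw [ENNReal.tsum_mul_right]
      _ = (∑' j:ℕ, ((2:ℝ≥0∞) ^ (-(δ*p)))^j)^(1/p) * ⨆ m, a m := by
          rw [ENNReal.mul_rpow_of_nonneg _ _ hp', ← ENNReal.rpow_mul,
            mul_one_div_cancel hp.ne', ENNReal.rpow_one]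
  · -- finite q
    have ht : 0 < q.toReal := ENNReal.toReal_pos hq0 hqt
    set t := q.toReal with hqt'
    have ht' : (0:ℝ) ≤ 1/t := one_div_nonneg.mpr ht.le
    set s := t/p with hs
    have hs0 : 0 < s := div_pos ht hp
    have hps : p * s = t := by rw [hs]; field_simp
    suffices h : ∃ M : ℝ≥0∞, M ≠ ⊤ ∧ ∀ a : ℤ → ℝ≥0∞,
        (∑' k : ℤ, (TSeq p δ a k) ^ t) ≤ M * ∑' k : ℤ, a k ^ t by
      obtain ⟨M, hM, hMb⟩ := h
      refine ⟨M^(1/t), ENNReal.rpow_ne_top_of_nonneg ht' hM, fun a => ?_⟩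
      simp only [ellq, if_neg hqt]
      calc (∑' k, (TSeq p δ a k)^t)^(1/t) ≤ (M * ∑' k, a k^t)^(1/t) :=
            ENNReal.rpow_le_rpow (hMb a) ht'
        _ = M^(1/t) * (∑' k, a k^t)^(1/t) := ENNReal.mul_rpow_of_nonneg _ _ ht'
    have hTpow : ∀ (a : ℤ → ℝ≥0∞) (k : ℤ), (TSeq p δ a k) ^ t =
        (∑' j : ℕ, ((2:ℝ≥0∞) ^ (-(j:ℝ)*δ) * a (k + (j:ℤ))) ^ p) ^ s := by
      intro a k
      simp only [TSeq]
      rw [← ENNReal.rpow_mul, show (1/p)*t = s from by rw [one_div_mul_eq_div, hs]]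
    by_cases hs1 : s ≤ 1
    · -- q ≤ p
      refine ⟨∑' j:ℕ, ((2:ℝ≥0∞) ^ (-(δ*t)))^j,
        geom_ne_top (two_rpow_lt_one (by nlinarith)), fun a => ?_⟩
      calc ∑' k : ℤ, (TSeq p δ a k) ^ t
          ≤ ∑' k : ℤ, ∑' j : ℕ, ((2:ℝ≥0∞) ^ (-(δ*t)))^j * a (k + (j:ℤ)) ^ t := by
            refine ENNReal.tsum_le_tsum fun k => ?_
            rw [hTpow a k]
            refine (tsum_rpow_le _ hs0 hs1).trans ?_
            refine ENNReal.tsum_le_tsum fun j => le_of_eq ?_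
            rw [← ENNReal.rpow_mul, hps, ENNReal.mul_rpow_of_nonneg _ _ ht.le,
              ← ENNReal.rpow_mul, show -(j:ℝ)*δ*t = -(j:ℝ)*(δ*t) by ring, two_pow_geom]
        _ = (∑' j:ℕ, ((2:ℝ≥0∞) ^ (-(δ*t)))^j) * ∑' k, a k ^ t :=
            double_sum (fun j => ((2:ℝ≥0∞) ^ (-(δ*t)))^j) (fun m => a m ^ t)
    · -- 1 < s : Holder
      push_neg at hs1
      set s' := Real.conjExponent s with hs'
      have hss : s.HolderConjugate s' := Real.HolderConjugate.conjExponent hs1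
      have hs'0 : 0 < s' := hss.symm.pos
      set c : ℕ → ℝ≥0∞ := fun j => ((2:ℝ≥0∞) ^ (-(δ*p)))^j with hc
      have hGc : (∑' j, c j) ≠ ⊤ := by
        simp only [hc]
        exact geom_ne_top (two_rpow_lt_one (by nlinarith))
      refine ⟨(∑' j, c j)^(s/s') * ∑' j, c j,
        ENNReal.mul_ne_top (ENNReal.rpow_ne_top_of_nonneg
          (div_nonneg hs0.le hs'0.le) hGc) hGc, fun a => ?_⟩
      have hkey : ∀ k : ℤ, (TSeq p δ a k) ^ t ≤
          (∑' j, c j)^(s/s') * ∑' j : ℕ, c j * a (k + (j:ℤ)) ^ t := by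
        intro k
        have hU : (∑' j : ℕ, ((2:ℝ≥0∞) ^ (-(j:ℝ)*δ) * a (k + (j:ℤ))) ^ p) =
            ∑' j : ℕ, c j * a (k + (j:ℤ)) ^ p := by
          refine tsum_congr fun j => ?_
          simp only [hc]
          rw [ENNReal.mul_rpow_of_nonneg _ _ hp.le, ← ENNReal.rpow_mul,
            show -(j:ℝ)*δ*p = -(j:ℝ)*(δ*p) by ring, two_pow_geom]
        have hholder : (∑' j : ℕ, c j * a (k + (j:ℤ)) ^ p) ≤
            (∑' j, c j)^(1/s') * (∑' j : ℕ, c j * a (k + (j:ℤ)) ^ t)^(1/s) := by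
          have hterm : ∀ j : ℕ, c j * a (k + (j:ℤ)) ^ p =
              ((c j)^(1/s')) * ((c j)^(1/s) * a (k + (j:ℤ)) ^ p) := by
            intro j
            rw [← mul_assoc,
              ← ENNReal.rpow_add_of_nonneg _ _ (one_div_nonneg.mpr hs'0.le)
                (one_div_nonneg.mpr hs0.le),
              show 1/s' + 1/s = 1 from by
                rw [one_div, one_div]; linarith [hss.inv_add_inv_eq_one],
              ENNReal.rpow_one]
          calc (∑' j : ℕ, c j * a (k + (j:ℤ)) ^ p)
              = ∑' j : ℕ, ((c j)^(1/s')) * ((c j)^(1/s) * a (k + (j:ℤ)) ^ p) :=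
                tsum_congr hterm
            _ ≤ (∑' j, ((c j)^(1/s'))^s')^(1/s') *
                  (∑' j, ((c j)^(1/s) * a (k + (j:ℤ)) ^ p)^s)^(1/s) :=
                tsum_holder hss.symm _ _
            _ = (∑' j, c j)^(1/s') * (∑' j : ℕ, c j * a (k + (j:ℤ)) ^ t)^(1/s) := by
                congr 2
                · refine tsum_congr fun j => ?_
                  rw [← ENNReal.rpow_mul, one_div, inv_mul_cancel₀ hs'0.ne',
                    ENNReal.rpow_one]
                · refine tsum_congr fun j => ?_
                  rw [ENNReal.mul_rpow_of_nonneg _ _ hs0.le, ← ENNReal.rpow_mul,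
                    one_div, inv_mul_cancel₀ hs0.ne', ENNReal.rpow_one,
                    ← ENNReal.rpow_mul, hps]
        calc (TSeq p δ a k) ^ t
            = (∑' j : ℕ, ((2:ℝ≥0∞) ^ (-(j:ℝ)*δ) * a (k + (j:ℤ))) ^ p) ^ s := hTpow a k
          _ = (∑' j : ℕ, c j * a (k + (j:ℤ)) ^ p) ^ s := by rw [hU]
          _ ≤ ((∑' j, c j)^(1/s') * (∑' j : ℕ, c j * a (k + (j:ℤ)) ^ t)^(1/s))^s :=
              ENNReal.rpow_le_rpow hholder hs0.le
          _ = (∑' j, c j)^(s/s') * ∑' j : ℕ, c j * a (k + (j:ℤ)) ^ t := by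
              rw [ENNReal.mul_rpow_of_nonneg _ _ hs0.le, ← ENNReal.rpow_mul,
                ← ENNReal.rpow_mul,
                show (1/s')*s = s/s' from by rw [one_div, inv_mul_eq_div],
                show (1/s)*s = 1 from one_div_mul_cancel hs0.ne',
                ENNReal.rpow_one]
      calc ∑' k : ℤ, (TSeq p δ a k) ^ t
          ≤ ∑' k : ℤ, (∑' j, c j)^(s/s') * ∑' j : ℕ, c j * a (k + (j:ℤ)) ^ t :=
            ENNReal.tsum_le_tsum hkey
        _ = (∑' j, c j)^(s/s') * ∑' k : ℤ, ∑' j : ℕ, c j * a (k + (j:ℤ)) ^ t :=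
            ENNReal.tsum_mul_left
        _ = (∑' j, c j)^(s/s') * ((∑' j, c j) * ∑' k, a k ^ t) := by
            rw [double_sum c (fun m => a m ^ t)]
        _ = ((∑' j, c j)^(s/s') * ∑' j, c j) * ∑' k, a k ^ t := by ring

def aSeq (μ : ℤ → ℝ) : ℤ → ℝ≥0∞ := fun k => (2:ℝ≥0∞) ^ (k:ℝ) * ENNReal.ofReal (μ k)

def K0 (p c : ℝ) : ℝ≥0∞ :=
  (2:ℝ≥0∞) ^ (1 + 1/p) * (ENNReal.ofReal c + (ENNReal.ofReal c) ^ (1/p))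

def eqk (k : ℤ) : ℕ ≃ {k' : ℤ // k ≤ k'} where
  toFun j := ⟨k + (j:ℤ), le_add_of_nonneg_right (Int.natCast_nonneg j)⟩
  invFun x := (x.1 - k).toNat
  left_inv j := by simp
  right_inv x := by
    have h := x.2
    exact Subtype.ext (by simp only []; omega)

@[simp] lemma eqk_coe (k : ℤ) (j : ℕ) : ((eqk k j : {k' : ℤ // k ≤ k'}) : ℤ) = k + j := rfl

lemma key_est {n : ℕ} {p ε c : ℝ} (hp : 0 < p) (hε0 : 0 < ε) (hε1 : ε < 1) (hc : 0 < c)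
    {μ : ℤ → ℝ} (hμ : ∀ k, 0 ≤ μ k) {φ : Euc n → ℝ} (hφ0 : ∀ x, 0 ≤ φ x)
    (hdec : ∀ k₀ : ℤ, ∃ ψ η : Euc n → ℝ, Measurable ψ ∧ Measurable η ∧
          (∀ x, 0 ≤ ψ x) ∧ (∀ x, 0 ≤ η x) ∧ (∀ x, φ x ≤ ψ x + η x) ∧
          (distFn (eF ψ) ((2 : ℝ≥0∞) ^ k₀)) ^ (1/p) ≤ ENNReal.ofReal (c * μ k₀) ∧
          ENNReal.ofReal ((2:ℝ) ^ ((k₀ : ℝ) * ε * p)) * distFn (eF η) ((2 : ℝ≥0∞) ^ k₀) ≤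
            ENNReal.ofReal c *
              ∑' k : {k : ℤ // k₀ ≤ k},
                ENNReal.ofReal (((2:ℝ) ^ (((k : ℤ) : ℝ) * ε) * μ (k : ℤ)) ^ p))
    (k : ℤ) :
    (2:ℝ≥0∞) ^ ((k:ℝ) + 1) * (distFn (eF φ) ((2:ℝ≥0∞) ^ ((k:ℝ)+1))) ^ (1/p) ≤
      K0 p c * (aSeq μ k + TSeq p (1-ε) (aSeq μ) k) := by
  have hp' : (0:ℝ) ≤ 1/p := one_div_nonneg.mpr hp.le
  have hcancel : ∀ u : ℝ, (u*p) * (1/p) = u := fun u => by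
    rw [mul_one_div, mul_div_assoc, div_self hp.ne', mul_one]
  obtain ⟨ψ, η, _, _, hψ0, hη0, hle, hψb, hηb⟩ := hdec k
  rw [← ENNReal.rpow_intCast (2:ℝ≥0∞) k] at hψb hηb
  rw [ofReal_two_rpow] at hηb
  set S := ∑' k' : {k' : ℤ // k ≤ k'},
      ENNReal.ofReal (((2:ℝ) ^ (((k' : ℤ) : ℝ) * ε) * μ (k' : ℤ)) ^ p) with hSdef
  -- split of the distribution function
  have hsplit : distFn (eF φ) ((2:ℝ≥0∞) ^ ((k:ℝ)+1)) ≤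
      distFn (eF ψ) ((2:ℝ≥0∞) ^ (k:ℝ)) + distFn (eF η) ((2:ℝ≥0∞) ^ (k:ℝ)) := by
    unfold distFn
    refine le_trans (measure_mono ?_) (measure_union_le _ _)
    intro x hx
    by_contra hcon
    rw [Set.mem_union] at hcon
    push_neg at hcon
    obtain ⟨h1, h2⟩ := hcon
    simp only [Set.mem_setOf_eq, not_lt] at h1 h2
    refine absurd hx ?_
    simp only [Set.mem_setOf_eq, not_lt]
    have hsum : eF φ x ≤ eF ψ x + eF η x := by
      simp only [eF, abs_of_nonneg (hφ0 x), abs_of_nonneg (hψ0 x), abs_of_nonneg (hη0 x)]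
      calc ENNReal.ofReal (φ x) ≤ ENNReal.ofReal (ψ x + η x) :=
            ENNReal.ofReal_le_ofReal (hle x)
        _ = _ := ENNReal.ofReal_add (hψ0 x) (hη0 x)
    have h2k : (2:ℝ≥0∞) ^ ((k:ℝ)+1) = (2:ℝ≥0∞)^(k:ℝ) + (2:ℝ≥0∞)^(k:ℝ) := by
      rw [two_rpow_add (k:ℝ) 1, ENNReal.rpow_one, mul_two]
    rw [h2k]
    exact hsum.trans (add_le_add h1 h2)
  -- the ψ part
  have hψ' : (2:ℝ≥0∞)^(k:ℝ) * (distFn (eF ψ) ((2:ℝ≥0∞) ^ (k:ℝ)))^(1/p) ≤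
      ENNReal.ofReal c * aSeq μ k := by
    calc (2:ℝ≥0∞)^(k:ℝ) * (distFn (eF ψ) ((2:ℝ≥0∞) ^ (k:ℝ)))^(1/p)
        ≤ (2:ℝ≥0∞)^(k:ℝ) * ENNReal.ofReal (c * μ k) := mul_le_mul_right hψb _
      _ = ENNReal.ofReal c * aSeq μ k := by
          rw [ENNReal.ofReal_mul hc.le, aSeq]; ring
  -- the sum transformation
  have hbase : ∀ (u : ℝ) (o : ℝ≥0∞), ((2:ℝ≥0∞)^u * o)^p = (2:ℝ≥0∞)^(u*p) * o^p :=
    fun u o => by rw [ENNReal.mul_rpow_of_nonneg _ _ hp.le, ← ENNReal.rpow_mul]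
  have hST : (2:ℝ≥0∞)^((k:ℝ)*(1-ε)*p) * S =
      ∑' j : ℕ, ((2:ℝ≥0∞) ^ (-(j:ℝ)*(1-ε)) * aSeq μ (k + (j:ℤ))) ^ p := by
    rw [hSdef, ← Equiv.tsum_eq (eqk k)
      (fun k' : {k' : ℤ // k ≤ k'} =>
        ENNReal.ofReal (((2:ℝ) ^ (((k' : ℤ) : ℝ) * ε) * μ (k' : ℤ)) ^ p)),
      ← ENNReal.tsum_mul_left]
    refine tsum_congr fun j => ?_
    simp only [eqk_coe, aSeq]
    have hx : (0:ℝ) < (2:ℝ) ^ (((k + (j:ℤ) : ℤ) : ℝ) * ε) := Real.rpow_pos_of_pos two_pos _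
    rw [← ENNReal.ofReal_rpow_of_nonneg (mul_nonneg hx.le (hμ _)) hp.le,
      ENNReal.ofReal_mul hx.le, ofReal_two_rpow]
    conv_rhs => rw [← mul_assoc, ← two_rpow_add]
    rw [hbase, hbase, ← mul_assoc, ← two_rpow_add]
    congr 2
    push_cast
    ring
  -- the η part
  have hη' : (2:ℝ≥0∞)^(k:ℝ) * (distFn (eF η) ((2:ℝ≥0∞) ^ (k:ℝ)))^(1/p) ≤
      (ENNReal.ofReal c)^(1/p) * TSeq p (1-ε) (aSeq μ) k := by
    have h1 : distFn (eF η) ((2:ℝ≥0∞) ^ (k:ℝ)) ≤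
        (2:ℝ≥0∞)^(-((k:ℝ)*ε*p)) * (ENNReal.ofReal c * S) := by
      calc distFn (eF η) ((2:ℝ≥0∞) ^ (k:ℝ))
          = (2:ℝ≥0∞)^(-((k:ℝ)*ε*p)) *
              ((2:ℝ≥0∞)^((k:ℝ)*ε*p) * distFn (eF η) ((2:ℝ≥0∞) ^ (k:ℝ))) := by
            rw [← mul_assoc, ← two_rpow_add, neg_add_cancel, ENNReal.rpow_zero, one_mul]
        _ ≤ _ := mul_le_mul_right hηb _
    have hTval : TSeq p (1-ε) (aSeq μ) k = (2:ℝ≥0∞)^((k:ℝ)*(1-ε)) * S^(1/p) := by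
      simp only [TSeq]
      rw [← hST, ENNReal.mul_rpow_of_nonneg _ _ hp', ← ENNReal.rpow_mul, hcancel]
    calc (2:ℝ≥0∞)^(k:ℝ) * (distFn (eF η) ((2:ℝ≥0∞) ^ (k:ℝ)))^(1/p)
        ≤ (2:ℝ≥0∞)^(k:ℝ) *
            ((2:ℝ≥0∞)^(-((k:ℝ)*ε*p)) * (ENNReal.ofReal c * S))^(1/p) :=
          mul_le_mul_right (ENNReal.rpow_le_rpow h1 hp') _
      _ = (ENNReal.ofReal c)^(1/p) * ((2:ℝ≥0∞)^((k:ℝ)*(1-ε)) * S^(1/p)) := by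
          rw [ENNReal.mul_rpow_of_nonneg ((2:ℝ≥0∞)^(-((k:ℝ)*ε*p))) _ hp',
            ENNReal.mul_rpow_of_nonneg _ S hp', ← ENNReal.rpow_mul,
            show -((k:ℝ)*ε*p) * (1/p) = -((k:ℝ)*ε) from by
              rw [show -((k:ℝ)*ε*p) = (-((k:ℝ)*ε))*p by ring, hcancel],
            show (k:ℝ)*(1-ε) = (k:ℝ) + -((k:ℝ)*ε) by ring, two_rpow_add]
          ring
      _ = _ := by rw [hTval]
  -- assemble
  calc (2:ℝ≥0∞) ^ ((k:ℝ) + 1) * (distFn (eF φ) ((2:ℝ≥0∞) ^ ((k:ℝ)+1))) ^ (1/p)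
      ≤ (2:ℝ≥0∞) ^ ((k:ℝ) + 1) *
          (distFn (eF ψ) ((2:ℝ≥0∞) ^ (k:ℝ)) + distFn (eF η) ((2:ℝ≥0∞) ^ (k:ℝ)))^(1/p) :=
        mul_le_mul_right (ENNReal.rpow_le_rpow hsplit hp') _
    _ ≤ (2:ℝ≥0∞) ^ ((k:ℝ) + 1) * ((2:ℝ≥0∞)^(1/p) *
          ((distFn (eF ψ) ((2:ℝ≥0∞) ^ (k:ℝ)))^(1/p) +
            (distFn (eF η) ((2:ℝ≥0∞) ^ (k:ℝ)))^(1/p))) :=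
        mul_le_mul_right (rpow_two_add_le hp' _ _) _
    _ = (2:ℝ≥0∞)^(1 + 1/p) *
          ((2:ℝ≥0∞)^(k:ℝ) * (distFn (eF ψ) ((2:ℝ≥0∞) ^ (k:ℝ)))^(1/p) +
            (2:ℝ≥0∞)^(k:ℝ) * (distFn (eF η) ((2:ℝ≥0∞) ^ (k:ℝ)))^(1/p)) := by
        rw [two_rpow_add (k:ℝ) 1, two_rpow_add 1 (1/p)]
        ring
    _ ≤ (2:ℝ≥0∞)^(1 + 1/p) *
          (ENNReal.ofReal c * aSeq μ k +
            (ENNReal.ofReal c)^(1/p) * TSeq p (1-ε) (aSeq μ) k) :=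
        mul_le_mul_right (add_le_add hψ' hη') _
    _ ≤ K0 p c * (aSeq μ k + TSeq p (1-ε) (aSeq μ) k) := by
        rw [K0, mul_assoc]
        refine mul_le_mul_right ?_ _
        calc ENNReal.ofReal c * aSeq μ k +
              (ENNReal.ofReal c)^(1/p) * TSeq p (1-ε) (aSeq μ) k
            ≤ (ENNReal.ofReal c + (ENNReal.ofReal c)^(1/p)) * aSeq μ k +
              (ENNReal.ofReal c + (ENNReal.ofReal c)^(1/p)) * TSeq p (1-ε) (aSeq μ) k :=
            add_le_add (mul_le_mul_left le_self_add _) (mul_le_mul_left le_add_self _)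
          _ = _ := by rw [← mul_add]

end StmtAux

/-- The variant of Lemma 1.1 with `m(ψ_{k₀}, 2^{k₀})^{1/p} ≤ c μ_{k₀}`. -/
theorem stmt1 (n : ℕ) (hn : 1 ≤ n) (p : ℝ) (hp : 0 < p) (q : ℝ≥0∞) (hq : 0 < q)
    (ε c : ℝ) (hε0 : 0 < ε) (hε1 : ε < 1) (hc : 0 < c) :
    ∃ C : ℝ, 0 < C ∧
      ∀ (μ : ℤ → ℝ) (φ : Euc n → ℝ),
        (∀ k, 0 ≤ μ k) →
        ellq q (fun k => ENNReal.ofReal ((2:ℝ) ^ k * μ k)) < ∞ →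
        Measurable φ → (∀ x, 0 ≤ φ x) →
        (∀ k₀ : ℤ, ∃ ψ η : Euc n → ℝ, Measurable ψ ∧ Measurable η ∧
          (∀ x, 0 ≤ ψ x) ∧ (∀ x, 0 ≤ η x) ∧ (∀ x, φ x ≤ ψ x + η x) ∧
          (distFn (eF ψ) ((2 : ℝ≥0∞) ^ k₀)) ^ (1/p) ≤ ENNReal.ofReal (c * μ k₀) ∧
          ENNReal.ofReal ((2:ℝ) ^ ((k₀ : ℝ) * ε * p)) * distFn (eF η) ((2 : ℝ≥0∞) ^ k₀) ≤
            ENNReal.ofReal c *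
              ∑' k : {k : ℤ // k₀ ≤ k},
                ENNReal.ofReal (((2:ℝ) ^ (((k : ℤ) : ℝ) * ε) * μ (k : ℤ)) ^ p)) →
        lorentzNorm p q (eF φ) < ∞ ∧
          lorentzNorm p q (eF φ) ≤
            ENNReal.ofReal C * ellq q (fun k => ENNReal.ofReal ((2:ℝ) ^ k * μ k)) := by
  classical
  have hδ : 0 < 1 - ε := by linarith
  obtain ⟨G, hG, hGb⟩ := StmtAux.Tbound hp q hq.ne' hδ
  set K : ℝ≥0∞ :=
    StmtAux.K0 p c * ((2:ℝ≥0∞)^(1 + 1/q.toReal) * (1 + G)) with hK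
  have hKtop : K ≠ ⊤ := by
    refine ENNReal.mul_ne_top ?_ (ENNReal.mul_ne_top (StmtAux.two_rpow_ne_top _) ?_)
    · exact ENNReal.mul_ne_top (StmtAux.two_rpow_ne_top _)
        (ENNReal.add_ne_top.mpr ⟨ENNReal.ofReal_ne_top,
          ENNReal.rpow_ne_top_of_nonneg (one_div_nonneg.mpr hp.le) ENNReal.ofReal_ne_top⟩)
    · exact ENNReal.add_ne_top.mpr ⟨ENNReal.one_ne_top, hG⟩
  refine ⟨K.toReal + 1, by positivity, ?_⟩
  intro μ φ hμ hA hφm hφ0 hdec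
  have haeq : (fun k : ℤ => ENNReal.ofReal ((2:ℝ) ^ k * μ k)) = StmtAux.aSeq μ := by
    funext k
    show _ = (2:ℝ≥0∞) ^ (k:ℝ) * ENNReal.ofReal (μ k)
    rw [ENNReal.ofReal_mul (by positivity), ← Real.rpow_intCast 2 k,
      StmtAux.ofReal_two_rpow]
  rw [haeq] at hA ⊢
  set a := StmtAux.aSeq μ with haa
  have hmain : lorentzNorm p q (eF φ) ≤ K * ellq q a := by
    have hDfun : (fun k : ℤ => (2:ℝ≥0∞)^k * (distFn (eF φ) ((2:ℝ≥0∞)^k))^(1/p)) =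
        fun k : ℤ => (2:ℝ≥0∞)^((k:ℝ)) * (distFn (eF φ) ((2:ℝ≥0∞)^((k:ℝ))))^(1/p) := by
      funext k; rw [ENNReal.rpow_intCast]
    have h0 : lorentzNorm p q (eF φ) =
        ellq q (fun k : ℤ =>
          (2:ℝ≥0∞)^((k:ℝ)) * (distFn (eF φ) ((2:ℝ≥0∞)^((k:ℝ))))^(1/p)) := by
      rw [show lorentzNorm p q (eF φ) =
        ellq q (fun k : ℤ => (2:ℝ≥0∞)^k * (distFn (eF φ) ((2:ℝ≥0∞)^k))^(1/p)) from rfl,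
        hDfun]
    set D : ℤ → ℝ≥0∞ :=
      fun k => (2:ℝ≥0∞)^((k:ℝ)) * (distFn (eF φ) ((2:ℝ≥0∞)^((k:ℝ))))^(1/p) with hD
    calc lorentzNorm p q (eF φ) = ellq q D := h0
      _ = ellq q (fun k => D (k+1)) := (StmtAux.ellq_shift q D 1).symm
      _ ≤ ellq q (fun k => StmtAux.K0 p c * (a k + StmtAux.TSeq p (1-ε) a k)) := by
          refine StmtAux.ellq_mono fun k => ?_
          have h := StmtAux.key_est hp hε0 hε1 hc hμ hφ0 hdec k
          have hcast : ((k+1 : ℤ) : ℝ) = (k:ℝ) + 1 := by push_cast; ring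
          show (2:ℝ≥0∞)^(((k+1:ℤ)):ℝ) *
              (distFn (eF φ) ((2:ℝ≥0∞)^(((k+1:ℤ)):ℝ)))^(1/p) ≤ _
          rw [hcast]
          exact h
      _ = StmtAux.K0 p c * ellq q (fun k => a k + StmtAux.TSeq p (1-ε) a k) :=
          StmtAux.ellq_const_mul q hq.ne' _ _
      _ ≤ StmtAux.K0 p c * ((2:ℝ≥0∞)^(1 + 1/q.toReal) *
            (ellq q a + ellq q (StmtAux.TSeq p (1-ε) a))) :=
          mul_le_mul_right (StmtAux.ellq_add_le q hq.ne' _ _) _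
      _ ≤ StmtAux.K0 p c * ((2:ℝ≥0∞)^(1 + 1/q.toReal) *
            (ellq q a + G * ellq q a)) := by
          gcongr
          exact hGb a
      _ = K * ellq q a := by
          rw [hK]; ring
  constructor
  · exact lt_of_le_of_lt hmain (ENNReal.mul_lt_top hKtop.lt_top hA)
  · refine hmain.trans (mul_le_mul_left ?_ _)
    calc K = ENNReal.ofReal K.toReal := (ENNReal.ofReal_toReal hKtop).symm
      _ ≤ ENNReal.ofReal (K.toReal + 1) := ENNReal.ofReal_le_ofReal (by linarith)

end
end

section
/- Let n ≥ 1, 0 < p ≤ 1, N = ⌊n(1/p−1)⌋, and let k(x,y) be a kernel on ℝⁿ×ℝⁿ (defined for x ≠ y) whose partial derivatives in y up to order N exist. Let a be an H^p atom with defining cube I centered at y_I, let 0 < δ ≤ 1, and suppose that for a.e. x ∉ (2/δ)I one has Ta(x) = ∫_I k(x,y) a(y) dy, with the integrand absolutely integrable. Then ∫_{ℝⁿ∖(2/δ)I} |Ta(x)|^p dx ≤ ω_p(δ). -/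
open MeasureTheory ENNReal Set

noncomputable section

/-- Partial derivative in the `i`-th coordinate direction. -/
def pderiv' {n : ℕ} (i : Fin n) (g : Euc n → ℝ) : Euc n → ℝ :=
  fun y => fderiv ℝ g y (EuclideanSpace.single i (1:ℝ))

/-- Iterated partial derivatives along a list of coordinate directions. -/
def pderivList {n : ℕ} : List (Fin n) → (Euc n → ℝ) → (Euc n → ℝ)
  | [], g => g
  | i :: L, g => pderiv' i (pderivList L g)

/-- The list of directions associated to a multi-index `α`. -/
def idxList {n : ℕ} (α : Fin n → ℕ) : List (Fin n) :=
  (List.ofFn fun i => List.replicate (α i) i).flatten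

/-- The degree-`N` Taylor polynomial in `y`, centered at `yI`, of the kernel `k(x, ·)`:
`Σ_{|α| ≤ N} (y - yI)^α k_α(x, yI)` with `k_α(x,yI) = (1/α!) D_y^α k(x,y)|_{y = yI}`. -/
def taylorPoly {n : ℕ} (N : ℕ) (k : Euc n → Euc n → ℝ) (x yI y : Euc n) : ℝ :=
  ∑ α : Fin n → Fin (N+1), if (∑ i, (α i : ℕ)) ≤ N then
    (∏ i, (y i - yI i) ^ (α i : ℕ)) *
      ((∏ i, (Nat.factorial (α i : ℕ) : ℝ))⁻¹ *
        pderivList (idxList fun i => (α i : ℕ)) (k x) yI)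
  else 0

/-- The modulus of continuity `ω_p(δ)`, a supremum over all cubes `I = cube yI ρ`. -/
def omegaP {n : ℕ} (N : ℕ) (p : ℝ) (k : Euc n → Euc n → ℝ) (δ : ℝ) : ℝ≥0∞ :=
  ⨆ (yI : Euc n) (ρ : ℝ) (_ : 0 < ρ),
    (volume (cube yI ρ))⁻¹ *
      ∫⁻ x in (cube yI ((2/δ) * ρ))ᶜ,
        (∫⁻ y in cube yI ρ, ENNReal.ofReal |k x y - taylorPoly N k x yI y|) ^ p

/- ### Auxiliary lemmas -/

lemma cube_eq' {n : ℕ} (c : Euc n) (r : ℝ) :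
    cube c r = ((MeasurableEquiv.toLp 2 (Fin n → ℝ)).symm) ⁻¹'
      (Set.univ.pi fun i => Icc (c i - r) (c i + r)) := by
  ext y
  simp only [cube, mem_setOf_eq, mem_preimage, Set.mem_pi, Set.mem_univ, mem_Icc,
    forall_true_left, abs_le, MeasurableEquiv.coe_toLp_symm]
  refine forall_congr' fun i => ?_
  constructor <;> intro h <;> constructor <;> linarith [h.1, h.2]

lemma measurableSet_cube {n : ℕ} (c : Euc n) (r : ℝ) : MeasurableSet (cube c r) := by
  rw [cube_eq']
  exact ((MeasurableEquiv.toLp 2 (Fin n → ℝ)).symm).measurable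
    (MeasurableSet.univ_pi fun i => measurableSet_Icc)

lemma volume_cube {n : ℕ} (c : Euc n) (r : ℝ) (hr : 0 ≤ r) :
    volume (cube c r) = ENNReal.ofReal ((2*r)^n) := by
  rw [cube_eq', (EuclideanSpace.volume_preserving_symm_measurableEquiv_toLp (Fin n)).measure_preimage
    ((MeasurableSet.univ_pi fun i => measurableSet_Icc).nullMeasurableSet),
    volume_pi_pi]
  have h2 : ∀ x : Fin n, c x + r - (c x - r) = 2 * r := fun x => by ring
  simp only [Real.volume_Icc, h2]
  rw [Finset.prod_const, ← ENNReal.ofReal_pow (by linarith), Finset.card_univ, Fintype.card_fin]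

lemma measurable_apply' {n : ℕ} (i : Fin n) : Measurable (fun y : Euc n => y i) :=
  (measurable_pi_apply i).comp ((MeasurableEquiv.toLp 2 (Fin n → ℝ)).symm).measurable

lemma integrable_mul_atom {n : ℕ} {p : ℝ} {a : Euc n → ℝ} {c : Euc n} {r : ℝ}
    (ha : IsHpAtom p a c r) (f : Euc n → ℝ) (hf : Measurable f) (C : ℝ)
    (hC : ∀ y ∈ cube c r, |f y| ≤ C) :
    Integrable (fun y => f y * a y) (volume : Measure (Euc n)) := by
  obtain ⟨hr, hma, hsupp, hbd, -⟩ := ha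
  set M : ℝ := ((((2*r)^n : ℝ)) ^ (1/p))⁻¹ with hM
  have hC0 : 0 ≤ C := le_trans (abs_nonneg _) (hC c (fun i => by simpa using hr.le))
  have hM0 : 0 ≤ M := by positivity
  refine Integrable.mono' (g := (cube c r).indicator fun _ => C * M) ?_ ?_ ?_
  · exact (integrable_indicator_iff (measurableSet_cube c r)).2 <|
      integrableOn_const (by rw [volume_cube c r hr.le]; exact ofReal_ne_top)
  · exact (hf.mul hma).aestronglyMeasurable
  · filter_upwards [hbd] with y hy
    by_cases hin : y ∈ cube c r
    · rw [indicator_of_mem hin]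
      calc ‖f y * a y‖ = |f y| * |a y| := abs_mul _ _
        _ ≤ C * M := mul_le_mul (hC y hin) hy (abs_nonneg _) hC0
    · rw [indicator_of_notMem hin, Real.norm_eq_abs, hsupp y hin, mul_zero, abs_zero]

lemma integrable_centered {n : ℕ} {p : ℝ} {a : Euc n → ℝ} {c : Euc n} {r : ℝ}
    (ha : IsHpAtom p a c r) (β : Fin n → ℕ) :
    Integrable (fun y => (∏ i, (y i - c i) ^ β i) * a y) (volume : Measure (Euc n)) := by
  refine integrable_mul_atom ha _ ?_ (∏ i, r ^ β i) ?_
  · exact Finset.measurable_prod _ fun i _ =>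
      ((measurable_apply' i).sub measurable_const).pow_const _
  · intro y hy
    rw [Finset.abs_prod]
    refine Finset.prod_le_prod (fun i _ => abs_nonneg _) fun i _ => ?_
    rw [abs_pow]
    exact pow_le_pow_left₀ (abs_nonneg _) (hy i) _

lemma integrable_monomial {n : ℕ} {p : ℝ} {a : Euc n → ℝ} {c : Euc n} {r : ℝ}
    (ha : IsHpAtom p a c r) (β : Fin n → ℕ) :
    Integrable (fun y => (∏ i, y i ^ β i) * a y) (volume : Measure (Euc n)) := by
  refine integrable_mul_atom ha _ ?_ (∏ i, (|c i| + r) ^ β i) ?_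
  · exact Finset.measurable_prod _ fun i _ => (measurable_apply' i).pow_const _
  · intro y hy
    rw [Finset.abs_prod]
    refine Finset.prod_le_prod (fun i _ => abs_nonneg _) fun i _ => ?_
    rw [abs_pow]
    have h1 := hy i
    have h2 := abs_sub_abs_le_abs_sub (y i) (c i)
    exact pow_le_pow_left₀ (abs_nonneg _) (by linarith) _

lemma moment_centered {n : ℕ} {p : ℝ} {a : Euc n → ℝ} {c : Euc n} {r : ℝ}
    (ha : IsHpAtom p a c r) (α : Fin n → ℕ) (hα : (∑ i, α i) ≤ ⌊(n : ℝ) * (1/p - 1)⌋₊) :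
    (∫ y : Euc n, (∏ i, (y i - c i) ^ α i) * a y) = 0 := by
  have key : (fun y : Euc n => (∏ i, (y i - c i) ^ α i) * a y) =
      fun y => ∑ β ∈ Fintype.piFinset (fun i => Finset.range (α i + 1)),
        (∏ i, ((-(c i)) ^ (α i - β i) * ((α i).choose (β i) : ℝ))) *
          ((∏ i, y i ^ β i) * a y) := by
    funext y
    have : (∏ i, (y i - c i) ^ α i) =
        ∑ β ∈ Fintype.piFinset (fun i => Finset.range (α i + 1)),
          ∏ i, (y i ^ β i * (-(c i)) ^ (α i - β i) * ((α i).choose (β i) : ℝ)) := by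
      rw [show (∏ i, (y i - c i) ^ α i) = ∏ i, ∑ j ∈ Finset.range (α i + 1),
          (y i ^ j * (-(c i)) ^ (α i - j) * ((α i).choose j : ℝ)) from
        Finset.prod_congr rfl fun i _ => by rw [sub_eq_add_neg, add_pow]]
      exact Finset.prod_univ_sum _ _
    rw [this, Finset.sum_mul]
    refine Finset.sum_congr rfl fun β _ => ?_
    rw [show ∀ g h : Fin n → ℝ, (∏ i, (y i ^ β i * g i * h i)) =
      (∏ i, y i ^ β i) * ∏ i, (g i * h i) from fun g h => by
        rw [← Finset.prod_mul_distrib]; exact Finset.prod_congr rfl fun i _ => by ring]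
    rw [Finset.prod_mul_distrib]
    ring
  rw [key, integral_finset_sum _ fun β _ => (integrable_monomial ha β).const_mul _]
  refine Finset.sum_eq_zero fun β hβ => ?_
  rw [integral_const_mul, ha.2.2.2.2 β ?_, mul_zero]
  refine le_trans (Finset.sum_le_sum fun i _ => ?_) hα
  exact Nat.lt_succ_iff.1 (Finset.mem_range.1 ((Fintype.mem_piFinset.1 hβ) i))

lemma taylor_mul_atom {n : ℕ} {p : ℝ} {a : Euc n → ℝ} {yI : Euc n} {ρ : ℝ}
    (ha : IsHpAtom p a yI ρ) (k : Euc n → Euc n → ℝ) (x : Euc n) :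
    Integrable (fun y => taylorPoly ⌊(n : ℝ) * (1/p - 1)⌋₊ k x yI y * a y)
        (volume : Measure (Euc n)) ∧
      (∫ y : Euc n, taylorPoly ⌊(n : ℝ) * (1/p - 1)⌋₊ k x yI y * a y) = 0 := by
  set N := ⌊(n : ℝ) * (1/p - 1)⌋₊ with hN
  set F : (Fin n → Fin (N+1)) → Euc n → ℝ := fun α y =>
    (if (∑ i, (α i : ℕ)) ≤ N then
      (∏ i, (y i - yI i) ^ (α i : ℕ)) *
        ((∏ i, (Nat.factorial (α i : ℕ) : ℝ))⁻¹ *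
          pderivList (idxList fun i => (α i : ℕ)) (k x) yI)
    else 0) * a y with hF
  have hfun : (fun y => taylorPoly N k x yI y * a y) = fun y => ∑ α, F α y := by
    funext y
    rw [taylorPoly, Finset.sum_mul]
  have hint : ∀ α : Fin n → Fin (N+1), Integrable (F α) (volume : Measure (Euc n)) := by
    intro α
    by_cases h : (∑ i, (α i : ℕ)) ≤ N
    · have : F α = fun y =>
          ((∏ i, (Nat.factorial (α i : ℕ) : ℝ))⁻¹ *
            pderivList (idxList fun i => (α i : ℕ)) (k x) yI) *
          ((∏ i, (y i - yI i) ^ (α i : ℕ)) * a y) := by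
        funext y; simp only [hF, if_pos h]; ring
      rw [this]
      exact (integrable_centered ha _).const_mul _
    · have : F α = fun _ => 0 := by funext y; simp only [hF, if_neg h, zero_mul]
      rw [this]
      exact integrable_zero _ _ _
  constructor
  · rw [hfun]
    exact integrable_finset_sum _ fun α _ => hint α
  · rw [hfun, integral_finset_sum _ fun α _ => hint α]
    refine Finset.sum_eq_zero fun α _ => ?_
    by_cases h : (∑ i, (α i : ℕ)) ≤ N
    · have : F α = fun y =>
          ((∏ i, (Nat.factorial (α i : ℕ) : ℝ))⁻¹ *
            pderivList (idxList fun i => (α i : ℕ)) (k x) yI) *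
          ((∏ i, (y i - yI i) ^ (α i : ℕ)) * a y) := by
        funext y; simp only [hF, if_pos h]; ring
      rw [this, integral_const_mul, moment_centered ha _ h, mul_zero]
    · have : F α = fun _ => 0 := by funext y; simp only [hF, if_neg h, zero_mul]
      rw [this, integral_zero]

/-- The basic estimate `∫_{ℝⁿ∖(2/δ)I} |Ta|^p ≤ ω_p(δ)` for an `H^p` atom `a`. -/
theorem stmt6 (n : ℕ) (hn : 1 ≤ n) (p : ℝ) (hp0 : 0 < p) (hp1 : p ≤ 1)
    (k : Euc n → Euc n → ℝ)
    (hk : ∀ (x : Euc n) (L : List (Fin n)), L.length < ⌊(n : ℝ) * (1/p - 1)⌋₊ →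
      Differentiable ℝ (pderivList L (k x)))
    (a : Euc n → ℝ) (yI : Euc n) (ρ : ℝ) (ha : IsHpAtom p a yI ρ)
    (δ : ℝ) (hδ0 : 0 < δ) (hδ1 : δ ≤ 1)
    (Ta : Euc n → ℝ)
    (hTa : ∀ᵐ x ∂(volume : Measure (Euc n)), x ∉ cube yI ((2/δ) * ρ) →
      IntegrableOn (fun y => k x y * a y) (cube yI ρ) volume ∧
        Ta x = ∫ y in cube yI ρ, k x y * a y) :
    ∫⁻ x in (cube yI ((2/δ) * ρ))ᶜ, ENNReal.ofReal (|Ta x| ^ p) ≤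
      omegaP ⌊(n : ℝ) * (1/p - 1)⌋₊ p k δ := by
  set N := ⌊(n : ℝ) * (1/p - 1)⌋₊ with hN
  obtain ⟨hρ, hma, hsupp, hbd, hmom⟩ := ha
  have ha' : IsHpAtom p a yI ρ := ⟨hρ, hma, hsupp, hbd, hmom⟩
  set M : ℝ := (((2*ρ)^n : ℝ)) ^ (1/p) with hM
  have h2ρ : (0:ℝ) < (2*ρ)^n := by positivity
  have hMpos : 0 < M := Real.rpow_pos_of_pos h2ρ _
  set V : ℝ≥0∞ := volume (cube yI ρ) with hVdef
  have hV : V = ENNReal.ofReal ((2*ρ)^n) := volume_cube _ _ hρ.le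
  have hVinv_ne_top : V⁻¹ ≠ ∞ := by
    rw [hV]
    simp [ENNReal.inv_ne_top, h2ρ]
  set J : Euc n → ℝ≥0∞ := fun x =>
    ∫⁻ y in cube yI ρ, ENNReal.ofReal |k x y - taylorPoly N k x yI y| with hJ
  -- key ENNReal identity: (ofReal M⁻¹) ^ p = V⁻¹
  have hMp : (ENNReal.ofReal M⁻¹) ^ p = V⁻¹ := by
    rw [ENNReal.ofReal_rpow_of_nonneg (by positivity) hp0.le,
      Real.inv_rpow hMpos.le, hM, ← Real.rpow_natCast ((2*ρ)) n]
    rw [← Real.rpow_mul (by positivity), one_div, inv_mul_cancel₀ hp0.ne', Real.rpow_one]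
    rw [ENNReal.ofReal_inv_of_pos (by rwa [Real.rpow_natCast]), hV, Real.rpow_natCast]
  -- pointwise a.e. bound
  have hae : ∀ᵐ x ∂(volume.restrict (cube yI ((2/δ) * ρ))ᶜ),
      ENNReal.ofReal (|Ta x| ^ p) ≤ V⁻¹ * J x ^ p := by
    filter_upwards [ae_restrict_of_ae hTa,
      ae_restrict_mem (measurableSet_cube yI ((2/δ) * ρ)).compl] with x htx hx
    obtain ⟨hki, hTax⟩ := htx hx
    set P : Euc n → ℝ := fun y => taylorPoly N k x yI y with hP
    obtain ⟨hPint, hPzero⟩ := taylor_mul_atom ha' k x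
    have h0 : (∫ y in cube yI ρ, P y * a y) = 0 := by
      rw [setIntegral_eq_integral_of_forall_compl_eq_zero
        (fun y hy => by rw [hsupp y hy, mul_zero])]
      exact hPzero
    have hTax' : Ta x = ∫ y in cube yI ρ, (k x y - P y) * a y := by
      simp only [sub_mul]
      rw [integral_sub hki hPint.integrableOn, h0, sub_zero, hTax]
    -- norm bound
    have step1 : ENNReal.ofReal |Ta x| ≤
        ∫⁻ y in cube yI ρ, (‖(k x y - P y) * a y‖₊ : ℝ≥0∞) := by
      rw [hTax', ← Real.norm_eq_abs, ofReal_norm]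
      exact enorm_integral_le_lintegral_enorm _
    have step2 : (∫⁻ y in cube yI ρ, (‖(k x y - P y) * a y‖₊ : ℝ≥0∞)) ≤
        J x * ENNReal.ofReal M⁻¹ := by
      have hbd' : ∀ᵐ y ∂(volume.restrict (cube yI ρ)),
          (‖(k x y - P y) * a y‖₊ : ℝ≥0∞) ≤
            ENNReal.ofReal |k x y - P y| * ENNReal.ofReal M⁻¹ := by
        filter_upwards [ae_restrict_of_ae hbd] with y hy
        rw [nnnorm_mul, ENNReal.coe_mul]
        refine mul_le_mul' ?_ ?_
        · rw [← enorm_eq_nnnorm, ← ofReal_norm, Real.norm_eq_abs]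
        · rw [← enorm_eq_nnnorm, ← ofReal_norm, Real.norm_eq_abs]
          exact ENNReal.ofReal_le_ofReal hy
      calc (∫⁻ y in cube yI ρ, (‖(k x y - P y) * a y‖₊ : ℝ≥0∞))
          ≤ ∫⁻ y in cube yI ρ,
              ENNReal.ofReal |k x y - P y| * ENNReal.ofReal M⁻¹ :=
            lintegral_mono_ae hbd'
        _ = J x * ENNReal.ofReal M⁻¹ := lintegral_mul_const' _ _ ofReal_ne_top
    calc ENNReal.ofReal (|Ta x| ^ p)
        = (ENNReal.ofReal |Ta x|) ^ p :=
          (ENNReal.ofReal_rpow_of_nonneg (abs_nonneg _) hp0.le).symm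
      _ ≤ (J x * ENNReal.ofReal M⁻¹) ^ p :=
          ENNReal.rpow_le_rpow (step1.trans step2) hp0.le
      _ = J x ^ p * (ENNReal.ofReal M⁻¹) ^ p :=
          ENNReal.mul_rpow_of_nonneg _ _ hp0.le
      _ = V⁻¹ * J x ^ p := by rw [hMp, mul_comm]
  calc (∫⁻ x in (cube yI ((2/δ) * ρ))ᶜ, ENNReal.ofReal (|Ta x| ^ p))
      ≤ ∫⁻ x in (cube yI ((2/δ) * ρ))ᶜ, V⁻¹ * J x ^ p := lintegral_mono_ae hae
    _ = V⁻¹ * ∫⁻ x in (cube yI ((2/δ) * ρ))ᶜ, J x ^ p :=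
        lintegral_const_mul' _ _ hVinv_ne_top
    _ ≤ omegaP N p k δ := by
        rw [omegaP]
        exact le_iSup_of_le yI (le_iSup_of_le ρ (le_iSup_of_le hρ le_rfl))

end
end

section
/- Let n ≥ 1, 0 < p ≤ 1, 0 < q₁ < q < q₂ ≤ ∞, and define η ∈ (0,1) by 1/q = (1−η)/q₁ + η/q₂ (with η/q₂ = 0 when q₂ = ∞). Fix ψ smooth, compactly supported on ℝⁿ with ∫ψ ≠ 0, and let N denote the associated non-tangential maximal operator. For locally integrable f and t > 0 set K(t,f) = inf { ‖N f₀‖_{p,q₁} + t ‖N f₁‖_{p,q₂} : f = f₀ + f₁, f₀, f₁ locally integrable }. Then there is a constant c such that for every locally integrable f admitting at least one such decomposition with both terms finite, ‖N f‖_{p,q} ≤ c · (∫_0^∞ (t^{−η} K(t,f))^q dt/t)^{1/q}. -/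
open MeasureTheory ENNReal Set

noncomputable section

/-- The Peetre `K`-functional for the couple `(H^{p,q₁}, H^{p,q₂})`, with the `H^{p,q}`
quasinorm computed via the non-tangential maximal operator associated to `ψ`. -/
def Kfun {n : ℕ} (ψ : Euc n → ℝ) (p : ℝ) (q1 q2 : ℝ≥0∞) (f : Euc n → ℝ) (t : ℝ) : ℝ≥0∞ :=
  ⨅ (f0 : Euc n → ℝ) (f1 : Euc n → ℝ) (_ : LocallyIntegrable f0 volume)
    (_ : LocallyIntegrable f1 volume) (_ : ∀ x, f x = f0 x + f1 x),
      lorentzNorm p q1 (ntMax ψ f0) + ENNReal.ofReal t * lorentzNorm p q2 (ntMax ψ f1)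

namespace Stmt10Aux

lemma pow2_mul (a b : ℝ) : (2:ℝ≥0∞) ^ a * (2:ℝ≥0∞) ^ b = (2:ℝ≥0∞) ^ (a + b) :=
  (ENNReal.rpow_add _ _ two_ne_zero ENNReal.ofNat_ne_top).symm

lemma tsum_holder {r s : ℝ} (hrs : Real.HolderConjugate r s) (f g : ℤ → ℝ≥0∞) :
    ∑' k, f k * g k ≤ (∑' k, f k ^ r) ^ (1/r) * (∑' k, g k ^ s) ^ (1/s) := by
  have h := ENNReal.lintegral_mul_le_Lp_mul_Lq (MeasureTheory.Measure.count : Measure ℤ) hrs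
    (Measurable.of_discrete (f := f)).aemeasurable (Measurable.of_discrete (f := g)).aemeasurable
  simpa [MeasureTheory.lintegral_count] using h

lemma single_le_rpow_tsum {r : ℝ} (hr : 0 < r) (f : ℤ → ℝ≥0∞) (k : ℤ) :
    f k ≤ (∑' i, f i ^ r) ^ (1/r) := by
  have h1 : f k ^ r ≤ ∑' i, f i ^ r := ENNReal.le_tsum k
  have h2 : (f k ^ r) ^ (1/r) ≤ (∑' i, f i ^ r) ^ (1/r) :=
    ENNReal.rpow_le_rpow h1 (by positivity)
  rwa [← ENNReal.rpow_mul, mul_one_div_cancel hr.ne', ENNReal.rpow_one] at h2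

lemma add_rpow_le (x y : ℝ≥0∞) {s : ℝ} (hs : 0 ≤ s) :
    (x + y) ^ s ≤ 2 ^ s * (x ^ s + y ^ s) := by
  have h1 : x + y ≤ 2 * (x ⊔ y) := by
    rw [two_mul]; exact add_le_add le_sup_left le_sup_right
  calc (x+y)^s ≤ (2*(x⊔y))^s := ENNReal.rpow_le_rpow h1 hs
  _ = 2^s * (x⊔y)^s := ENNReal.mul_rpow_of_nonneg _ _ hs
  _ ≤ 2^s * (x^s + y^s) := by
      gcongr
      rcases le_total x y with h|h
      · rw [sup_eq_right.2 h]; exact le_add_self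
      · rw [sup_eq_left.2 h]; exact le_self_add

lemma exists_pow2_le {δ : ℝ≥0∞} (hδ : 0 < δ) {γ : ℝ} (hγ : 0 < γ) :
    ∃ N : ℤ, ∀ j : ℤ, j ≤ N → (2:ℝ≥0∞) ^ ((j:ℝ) * γ) ≤ δ := by
  obtain ⟨m, hm⟩ := ENNReal.exists_inv_two_pow_lt hδ.ne'
  refine ⟨-(⌈(m:ℝ)/γ⌉ : ℤ), fun j hj => ?_⟩
  have h0 : (m:ℝ)/γ ≤ ((⌈(m:ℝ)/γ⌉ : ℤ) : ℝ) := Int.le_ceil _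
  have hj1 : (j:ℝ) ≤ -((⌈(m:ℝ)/γ⌉ : ℤ) : ℝ) := by exact_mod_cast hj
  have hj2 : (j:ℝ) ≤ -((m:ℝ)/γ) := by linarith
  have h1 : (j:ℝ) * γ ≤ -(m:ℝ) := by
    have := mul_le_mul_of_nonneg_right hj2 hγ.le
    have he : -((m:ℝ)/γ) * γ = -(m:ℝ) := by field_simp
    linarith [he ▸ this]
  calc (2:ℝ≥0∞) ^ ((j:ℝ)*γ) ≤ (2:ℝ≥0∞) ^ (-(m:ℝ)) :=
        ENNReal.rpow_le_rpow_of_exponent_le one_le_two h1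
  _ = 2⁻¹ ^ m := by
      rw [ENNReal.rpow_neg, ENNReal.rpow_natCast, ← ENNReal.inv_pow]
  _ ≤ δ := hm.le

lemma twoE (m : ℤ) : ENNReal.ofReal ((2:ℝ)^m) = (2:ℝ≥0∞) ^ ((m:ℝ)) := by
  rw [← Real.rpow_intCast 2 m, ← ENNReal.ofReal_rpow_of_pos two_pos, ENNReal.ofReal_ofNat]


lemma pow2_ne_top (a : ℝ) : (2:ℝ≥0∞) ^ a ≠ ∞ := by
  simp [ENNReal.rpow_eq_top_iff]

lemma pow2_pos (a : ℝ) : 0 < (2:ℝ≥0∞) ^ a := ENNReal.rpow_pos (by norm_num) ENNReal.ofNat_ne_top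

lemma pow2_ne_zero (a : ℝ) : (2:ℝ≥0∞) ^ a ≠ 0 := (pow2_pos a).ne'

lemma tsum_shift (f : ℤ → ℝ≥0∞) : ∑' k : ℤ, f (k-1) = ∑' k, f k := by
  simpa using (Equiv.subRight (1:ℤ)).tsum_eq f

lemma lorentz_rpow {n : ℕ} {p r : ℝ} (hr : 0 < r) (G : Euc n → ℝ≥0∞) :
    (lorentzNorm p (ENNReal.ofReal r) G) ^ r
      = ∑' k : ℤ, ((2:ℝ≥0∞)^(k:ℤ) * (distFn G ((2:ℝ≥0∞)^(k:ℤ)))^(1/p)) ^ r := by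
  unfold lorentzNorm
  rw [if_neg ENNReal.ofReal_ne_top, ENNReal.toReal_ofReal hr.le,
    ← ENNReal.rpow_mul, one_div_mul_cancel hr.ne', ENNReal.rpow_one]

lemma lorentz_rpow' {n : ℕ} {p : ℝ} {r : ℝ≥0∞} (hr0 : r ≠ 0) (hrt : r ≠ ∞) (G : Euc n → ℝ≥0∞) :
    (lorentzNorm p r G) ^ r.toReal
      = ∑' k : ℤ, ((2:ℝ≥0∞)^(k:ℤ) * (distFn G ((2:ℝ≥0∞)^(k:ℤ)))^(1/p)) ^ r.toReal := by
  unfold lorentzNorm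
  rw [if_neg hrt, ← ENNReal.rpow_mul,
    one_div_mul_cancel (ENNReal.toReal_ne_zero.2 ⟨hr0, hrt⟩), ENNReal.rpow_one]

lemma ntMax_le_add {n : ℕ} (ψ f f0 f1 : Euc n → ℝ)
    (h0 : MeasureTheory.LocallyIntegrable f0 volume)
    (h1 : MeasureTheory.LocallyIntegrable f1 volume)
    (hc : Continuous ψ) (hcs : HasCompactSupport ψ)
    (hsum : ∀ x, f x = f0 x + f1 x) (x : Euc n) :
    ntMax ψ f x ≤ ntMax ψ f0 x + ntMax ψ f1 x := by
  refine iSup_le fun y => iSup_le fun t => iSup_le fun ht => iSup_le fun hd => ?_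
  set g : Euc n → ℝ := fun z => (t ^ n)⁻¹ * ψ (t⁻¹ • (y - z)) with hg
  have hgc : Continuous g := by
    apply continuous_const.mul
    exact hc.comp (by fun_prop)
  have hgs : HasCompactSupport g := by
    have himg : IsCompact ((fun w : Euc n => y - t • w) '' tsupport ψ) :=
      hcs.image (continuous_const.sub (continuous_id.const_smul t))
    apply HasCompactSupport.intro himg
    intro z hz
    by_contra hgz
    have hψz : ψ (t⁻¹ • (y - z)) ≠ 0 := by
      intro h; exact hgz (by simp [hg, h])
    have hmem : t⁻¹ • (y - z) ∈ tsupport ψ := subset_tsupport ψ hψz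
    refine hz ⟨_, hmem, ?_⟩
    show y - t • t⁻¹ • (y - z) = z
    rw [smul_smul, mul_inv_cancel₀ ht.ne', one_smul]; abel
  have hint0 : Integrable (fun z => f0 z * g z) volume := by
    have := h0.integrable_smul_left_of_hasCompactSupport hgc hgs
    simp only [smul_eq_mul] at this
    exact this.congr (Filter.Eventually.of_forall fun z => by ring)
  have hint1 : Integrable (fun z => f1 z * g z) volume := by
    have := h1.integrable_smul_left_of_hasCompactSupport hgc hgs
    simp only [smul_eq_mul] at this
    exact this.congr (Filter.Eventually.of_forall fun z => by ring)
  have hconv : convAt ψ f t y = convAt ψ f0 t y + convAt ψ f1 t y := by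
    unfold convAt
    rw [← integral_add hint0 hint1]
    apply integral_congr_ae
    filter_upwards with z
    rw [hsum z]; ring
  have e0 : ENNReal.ofReal |convAt ψ f0 t y| ≤ ntMax ψ f0 x :=
    le_iSup_of_le y (le_iSup_of_le t (le_iSup_of_le ht (le_iSup_of_le hd le_rfl)))
  have e1 : ENNReal.ofReal |convAt ψ f1 t y| ≤ ntMax ψ f1 x :=
    le_iSup_of_le y (le_iSup_of_le t (le_iSup_of_le ht (le_iSup_of_le hd le_rfl)))
  calc ENNReal.ofReal |convAt ψ f t y|
      ≤ ENNReal.ofReal (|convAt ψ f0 t y| + |convAt ψ f1 t y|) := by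
        rw [hconv]; exact ENNReal.ofReal_le_ofReal (abs_add_le _ _)
    _ ≤ ENNReal.ofReal |convAt ψ f0 t y| + ENNReal.ofReal |convAt ψ f1 t y| :=
        ENNReal.ofReal_add_le
    _ ≤ _ := add_le_add e0 e1

end Stmt10Aux

open Stmt10Aux

set_option maxHeartbeats 2000000 in
/-- One half of Theorem 2.5: `(H^{p,q₁},H^{p,q₂})_{η,q} ↪ H^{p,q}`. -/
theorem stmt10 (n : ℕ) (hn : 1 ≤ n) (p : ℝ) (hp0 : 0 < p) (hp1 : p ≤ 1)
    (q1 q : ℝ) (q2 : ℝ≥0∞) (hq1 : 0 < q1) (hq1q : q1 < q) (hqq2 : ENNReal.ofReal q < q2)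
    (η : ℝ) (hη0 : 0 < η) (hη1 : η < 1)
    (hηdef : 1/q = (1 - η)/q1 + (if q2 = ∞ then 0 else η / q2.toReal))
    (ψ : Euc n → ℝ) (hψ : ContDiff ℝ (⊤ : ℕ∞) ψ) (hψc : HasCompactSupport ψ)
    (hψi : (∫ x : Euc n, ψ x) ≠ 0) :
    ∃ c : ℝ, 0 < c ∧
      ∀ f : Euc n → ℝ, LocallyIntegrable f volume →
        (∃ f0 f1 : Euc n → ℝ, LocallyIntegrable f0 volume ∧ LocallyIntegrable f1 volume ∧
          (∀ x, f x = f0 x + f1 x) ∧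
          lorentzNorm p (ENNReal.ofReal q1) (ntMax ψ f0) < ∞ ∧
          lorentzNorm p q2 (ntMax ψ f1) < ∞) →
        lorentzNorm p (ENNReal.ofReal q) (ntMax ψ f) ≤
          ENNReal.ofReal c *
            (∫⁻ t in Ioi (0:ℝ),
              (ENNReal.ofReal (t ^ (-η)) * Kfun ψ p (ENNReal.ofReal q1) q2 f t) ^ q /
                ENNReal.ofReal t) ^ (1/q) := by
  classical
  have hq : 0 < q := hq1.trans hq1q
  have hq' : q ≠ 0 := hq.ne'
  have hqt : (ENNReal.ofReal q).toReal = q := ENNReal.toReal_ofReal hq.le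
  have hq1t : (ENNReal.ofReal q1).toReal = q1 := ENNReal.toReal_ofReal hq1.le
  have h2net : (2:ℝ≥0∞) ≠ ∞ := ENNReal.ofNat_ne_top
  set C1 : ℝ≥0∞ := (2:ℝ≥0∞) ^ ((1:ℝ) + 1/p) with hC1
  set C2 : ℝ≥0∞ := (2*C1) ^ q * (2:ℝ≥0∞) ^ (η*(1-η)*q) * (2:ℝ≥0∞) ^ q with hC2
  set C3 : ℝ≥0∞ := C2 * (2:ℝ≥0∞) ^ (η*q+1) with hC3
  have hexp1 : (0:ℝ) ≤ η*(1-η)*q :=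
    mul_nonneg (mul_nonneg hη0.le (by linarith)) hq.le
  have hexp2 : (0:ℝ) ≤ η*q+1 := by nlinarith [mul_pos hη0 hq]
  have hC1top : C1 ≠ ∞ := (ENNReal.rpow_lt_top_of_nonneg (by positivity) h2net).ne
  have hC1pos : 0 < C1 := ENNReal.rpow_pos (by norm_num) h2net
  have hC2top : C2 ≠ ∞ := by
    rw [hC2]
    refine (ENNReal.mul_lt_top (ENNReal.mul_lt_top ?_ ?_) ?_).ne
    · exact ENNReal.rpow_lt_top_of_nonneg hq.le (ENNReal.mul_ne_top h2net hC1top)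
    · exact ENNReal.rpow_lt_top_of_nonneg hexp1 h2net
    · exact ENNReal.rpow_lt_top_of_nonneg hq.le h2net
  have hC3top : C3 ≠ ∞ := by
    rw [hC3]
    exact (ENNReal.mul_lt_top hC2top.lt_top (ENNReal.rpow_lt_top_of_nonneg hexp2 h2net)).ne
  refine ⟨(C3 ^ (1/q)).toReal + 1, by positivity, ?_⟩
  intro f hf _
  set F := ntMax ψ f with hF
  set K : ℝ → ℝ≥0∞ := Kfun ψ p (ENNReal.ofReal q1) q2 f with hK
  set I : ℝ≥0∞ := ∫⁻ t in Ioi (0:ℝ),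
      (ENNReal.ofReal (t ^ (-η)) * K t) ^ q / ENNReal.ofReal t with hI
  rcases eq_top_or_lt_top I with hItop | hIlt
  · rw [hItop, ENNReal.top_rpow_of_pos (by positivity),
      ENNReal.mul_top (ENNReal.ofReal_pos.mpr (by positivity)).ne']
    exact le_top
  -- monotonicity of the K functional
  have Kmono : ∀ ⦃s t : ℝ⦄, s ≤ t → K s ≤ K t := by
    intro s t hst
    refine iInf_mono fun g0 => iInf_mono fun g1 => iInf_mono fun _ => iInf_mono fun _ =>
      iInf_mono fun _ =>
      add_le_add le_rfl (mul_le_mul' (ENNReal.ofReal_le_ofReal hst) le_rfl)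
  set KD : ℤ → ℝ≥0∞ := fun j => K ((2:ℝ)^j) with hKD
  set SK : ℝ≥0∞ := ∑' j : ℤ, ((2:ℝ≥0∞) ^ (-(j:ℝ)*η) * KD j) ^ q with hSK
  -- Step B : SK ≤ 2^(ηq+1) * I
  have hSKI : SK ≤ (2:ℝ≥0∞) ^ (η*q+1) * I := by
    have hkey : ∀ j : ℤ, ((2:ℝ≥0∞) ^ (-(j:ℝ)*η) * KD j) ^ q ≤ (2:ℝ≥0∞) ^ (η*q+1) *
        ∫⁻ t in Ico ((2:ℝ)^j) ((2:ℝ)^(j+1)),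
          (ENNReal.ofReal (t ^ (-η)) * K t) ^ q / ENNReal.ofReal t := by
      intro j
      set cst : ℝ≥0∞ :=
        (ENNReal.ofReal (((2:ℝ)^(j+1)) ^ (-η)) * KD j) ^ q / ENNReal.ofReal ((2:ℝ)^(j+1)) with hcst
      have hptwise : ∀ t ∈ Ico ((2:ℝ)^j) ((2:ℝ)^(j+1)),
          cst ≤ (ENNReal.ofReal (t ^ (-η)) * K t) ^ q / ENNReal.ofReal t := by
        intro t ht
        have htpos : (0:ℝ) < t := lt_of_lt_of_le (zpow_pos two_pos j) ht.1
        refine ENNReal.div_le_div ?_ (ENNReal.ofReal_le_ofReal ht.2.le)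
        refine ENNReal.rpow_le_rpow (mul_le_mul' ?_ (Kmono ht.1)) hq.le
        exact ENNReal.ofReal_le_ofReal
          (Real.rpow_le_rpow_of_nonpos htpos ht.2.le (neg_nonpos.mpr hη0.le))
      have hlow : cst * ENNReal.ofReal ((2:ℝ)^j) ≤
          ∫⁻ t in Ico ((2:ℝ)^j) ((2:ℝ)^(j+1)),
            (ENNReal.ofReal (t ^ (-η)) * K t) ^ q / ENNReal.ofReal t := by
        have h1 : ∫⁻ _ in Ico ((2:ℝ)^j) ((2:ℝ)^(j+1)), cst = cst * ENNReal.ofReal ((2:ℝ)^j) := by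
          rw [setLIntegral_const, Real.volume_Ico]
          congr 2
          rw [zpow_add_one₀ (two_ne_zero)]
          ring
        rw [← h1]
        refine lintegral_mono_ae ?_
        rw [ae_restrict_iff' measurableSet_Ico]
        exact Filter.Eventually.of_forall hptwise
      have e1 : ENNReal.ofReal (((2:ℝ)^(j+1)) ^ (-η)) = (2:ℝ≥0∞) ^ (((j:ℝ)+1) * (-η)) := by
        rw [← Real.rpow_intCast 2 (j+1), ← Real.rpow_mul (by norm_num),
          ← ENNReal.ofReal_rpow_of_pos two_pos, ENNReal.ofReal_ofNat]
        congr 1; push_cast; ring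
      have e2 : ENNReal.ofReal ((2:ℝ)^(j+1)) = (2:ℝ≥0∞) ^ ((j:ℝ)+1) := by
        rw [twoE]; congr 1; push_cast; ring
      refine le_trans (le_of_eq ?_) (mul_le_mul_right hlow _)
      rw [hcst, e1, e2]
      rw [ENNReal.mul_rpow_of_nonneg _ _ hq.le, ENNReal.mul_rpow_of_nonneg _ _ hq.le]
      rw [← ENNReal.rpow_mul, ← ENNReal.rpow_mul]
      rw [div_eq_mul_inv, ← ENNReal.rpow_neg, twoE j]
      calc (2:ℝ≥0∞) ^ (-(j:ℝ)*η*q) * KD j ^ q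
          = ((2:ℝ≥0∞)^(η*q+1) * (2:ℝ≥0∞)^(((j:ℝ)+1)*(-η)*q) * (2:ℝ≥0∞)^(-((j:ℝ)+1))
              * (2:ℝ≥0∞)^((j:ℝ))) * KD j ^ q := by
            rw [pow2_mul, pow2_mul, pow2_mul,
              show η*q+1 + ((j:ℝ)+1)*(-η)*q + -((j:ℝ)+1) + (j:ℝ) = -(j:ℝ)*η*q from by ring]
      _ = (2:ℝ≥0∞)^(η*q+1) * ((2:ℝ≥0∞)^(((j:ℝ)+1)*(-η)*q) * KD j ^ q * (2:ℝ≥0∞)^(-((j:ℝ)+1))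
              * (2:ℝ≥0∞)^((j:ℝ))) := by ring
    calc SK ≤ ∑' j : ℤ, (2:ℝ≥0∞) ^ (η*q+1) *
        ∫⁻ t in Ico ((2:ℝ)^j) ((2:ℝ)^(j+1)),
          (ENNReal.ofReal (t ^ (-η)) * K t) ^ q / ENNReal.ofReal t := ENNReal.tsum_le_tsum hkey
    _ = (2:ℝ≥0∞) ^ (η*q+1) * ∑' j : ℤ, ∫⁻ t in Ico ((2:ℝ)^j) ((2:ℝ)^(j+1)),
          (ENNReal.ofReal (t ^ (-η)) * K t) ^ q / ENNReal.ofReal t := ENNReal.tsum_mul_left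
    _ ≤ (2:ℝ≥0∞) ^ (η*q+1) * I := by
        gcongr
        rw [← lintegral_iUnion (fun j => measurableSet_Ico) ?_]
        · refine lintegral_mono_set ?_
          intro t ht
          simp only [mem_iUnion] at ht
          obtain ⟨j, hj⟩ := ht
          exact lt_of_lt_of_le (zpow_pos two_pos j) hj.1
        · intro i j hij
          rcases hij.lt_or_gt with h | h
          · apply Set.disjoint_left.2
            intro t hti htj
            exact absurd (lt_of_lt_of_le hti.2 (zpow_le_zpow_right₀ one_le_two (by omega)))
              (not_lt.2 htj.1)
          · apply Set.disjoint_right.2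
            intro t htj hti
            exact absurd (lt_of_lt_of_le htj.2 (zpow_le_zpow_right₀ one_le_two (by omega)))
              (not_lt.2 hti.1)
  have hSKfin : SK ≠ ∞ :=
    (lt_of_le_of_lt hSKI (ENNReal.mul_lt_top
      (ENNReal.rpow_lt_top_of_nonneg hexp2 h2net) hIlt)).ne
  have hKDfin : ∀ j : ℤ, KD j ≠ ∞ := by
    intro j
    intro htop
    have h1 : ((2:ℝ≥0∞) ^ (-(j:ℝ)*η) * KD j) ^ q ≤ SK := ENNReal.le_tsum j
    rw [htop, ENNReal.mul_top (ENNReal.rpow_pos (by norm_num) h2net).ne',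
      ENNReal.top_rpow_of_pos hq] at h1
    exact hSKfin (top_le_iff.1 h1)

  -- the dyadic sequence of the target norm
  set a : ℤ → ℝ≥0∞ := fun k => (2:ℝ≥0∞)^(k:ℤ) * (distFn F ((2:ℝ≥0∞)^(k:ℤ)))^(1/p) with ha
  set M : ℝ≥0∞ := (1 - (2:ℝ≥0∞)^(-q))⁻¹ with hM
  have hMfin : M ≠ ∞ := by
    have hr : (2:ℝ≥0∞)^(-q) < 1 := by
      have h := ENNReal.rpow_lt_rpow_of_exponent_lt (x := (2:ℝ≥0∞)) one_lt_two h2net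
        (show -q < 0 by linarith)
      simpa using h
    rw [hM, Ne, ENNReal.inv_eq_top, tsub_eq_zero_iff_le]
    exact not_le.2 hr
  -- the core estimate
  have core : ∀ ϵ : ℝ≥0∞, 0 < ϵ → ϵ ≠ ∞ →
      (∑' k : ℤ, (a k)^q) ≤ C2 * (SK + ϵ^q * M) := by
    intro ϵ hϵ0 hϵtop
    set w : ℤ → ℝ≥0∞ := fun j => ((2:ℝ≥0∞)⁻¹) ^ (Encodable.encode j) with hw
    have hw0 : ∀ j, w j ≠ 0 := fun j => pow_ne_zero _ (by simp)
    have hwtop : ∀ j, w j ≠ ∞ := fun j => ENNReal.pow_ne_top (by simp)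
    have hwq : ∀ j, (w j)^q = ((2:ℝ≥0∞)^(-q)) ^ (Encodable.encode j) := by
      intro j
      show ((2:ℝ≥0∞)⁻¹ ^ (Encodable.encode j)) ^ q = _
      rw [← ENNReal.rpow_natCast ((2:ℝ≥0∞)⁻¹) (Encodable.encode j),
        ← ENNReal.rpow_natCast ((2:ℝ≥0∞)^(-q)) (Encodable.encode j),
        ← ENNReal.rpow_mul, ← ENNReal.rpow_mul, ← ENNReal.rpow_neg_one (2:ℝ≥0∞),
        ← ENNReal.rpow_mul]
      congr 1; ring
    have hwsum : ∑' j : ℤ, (w j)^q ≤ M := by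
      rw [hM, ← ENNReal.tsum_geometric ((2:ℝ≥0∞)^(-q))]
      exact ENNReal.summable.tsum_le_tsum_of_inj (fun j : ℤ => Encodable.encode j) Encodable.encode_injective
        (fun _ _ => zero_le) (fun j => le_of_eq (hwq j)) ENNReal.summable
    set L : ℤ → ℝ≥0∞ := fun j => KD j + ϵ * (2:ℝ≥0∞)^((j:ℝ)*η) * w j with hLd
    have hLfin : ∀ j, L j ≠ ∞ := by
      intro j
      rw [hLd]
      exact ENNReal.add_ne_top.2 ⟨hKDfin j,
        ENNReal.mul_ne_top (ENNReal.mul_ne_top hϵtop (pow2_ne_top _)) (hwtop j)⟩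
    have hexd : ∀ j : ℤ, ∃ g0 g1 : Euc n → ℝ, LocallyIntegrable g0 volume ∧
        LocallyIntegrable g1 volume ∧ (∀ x, f x = g0 x + g1 x) ∧
        lorentzNorm p (ENNReal.ofReal q1) (ntMax ψ g0) ≤ L j ∧
        lorentzNorm p q2 (ntMax ψ g1) ≤ (2:ℝ≥0∞)^(-(j:ℝ)) * L j := by
      intro j
      have hlt : K ((2:ℝ)^j) < L j := by
        rw [hLd]
        have he : K ((2:ℝ)^j) = KD j := by rw [hKD]
        rw [he]
        refine ENNReal.lt_add_right (hKDfin j) ?_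
        exact (ENNReal.mul_pos (ENNReal.mul_pos hϵ0.ne' (pow2_ne_zero _)).ne' (hw0 j)).ne'
      rw [hK] at hlt
      unfold Kfun at hlt
      rw [iInf_lt_iff] at hlt; obtain ⟨g0, hlt⟩ := hlt
      rw [iInf_lt_iff] at hlt; obtain ⟨g1, hlt⟩ := hlt
      rw [iInf_lt_iff] at hlt; obtain ⟨hg0, hlt⟩ := hlt
      rw [iInf_lt_iff] at hlt; obtain ⟨hg1, hlt⟩ := hlt
      rw [iInf_lt_iff] at hlt; obtain ⟨hge, hlt⟩ := hlt
      refine ⟨g0, g1, hg0, hg1, hge, le_trans le_self_add hlt.le, ?_⟩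
      have h1 : ENNReal.ofReal ((2:ℝ)^j) * lorentzNorm p q2 (ntMax ψ g1) ≤ L j :=
        le_trans le_add_self hlt.le
      rw [twoE j] at h1
      calc lorentzNorm p q2 (ntMax ψ g1)
          = (2:ℝ≥0∞)^(-(j:ℝ)) * ((2:ℝ≥0∞)^((j:ℝ)) * lorentzNorm p q2 (ntMax ψ g1)) := by
            rw [← mul_assoc, pow2_mul, neg_add_cancel, ENNReal.rpow_zero, one_mul]
      _ ≤ (2:ℝ≥0∞)^(-(j:ℝ)) * L j := mul_le_mul_right h1 _
    choose g0 g1 hg0 hg1 hge hXb hXc using hexd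
    set db : ℤ → ℤ → ℝ≥0∞ := fun j k =>
      (2:ℝ≥0∞)^(k-1:ℤ) * (distFn (ntMax ψ (g0 j)) ((2:ℝ≥0∞)^(k-1:ℤ)))^(1/p) with hdb
    set dc : ℤ → ℤ → ℝ≥0∞ := fun j k =>
      (2:ℝ≥0∞)^(k-1:ℤ) * (distFn (ntMax ψ (g1 j)) ((2:ℝ≥0∞)^(k-1:ℤ)))^(1/p) with hdc
    have hdbsum : ∀ j, ∑' k : ℤ, (db j k)^q1
        = (lorentzNorm p (ENNReal.ofReal q1) (ntMax ψ (g0 j)))^q1 := by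
      intro j
      rw [lorentz_rpow hq1]
      exact tsum_shift (fun k : ℤ =>
        ((2:ℝ≥0∞)^(k:ℤ) * (distFn (ntMax ψ (g0 j)) ((2:ℝ≥0∞)^(k:ℤ)))^(1/p)) ^ q1)
    have hdble : ∀ j k, db j k ≤ L j := by
      intro j k
      have h1 : db j k ≤ (∑' i : ℤ, (db j i)^q1)^(1/q1) := single_le_rpow_tsum hq1 _ k
      rw [hdbsum j, ← ENNReal.rpow_mul, mul_one_div_cancel hq1.ne', ENNReal.rpow_one] at h1
      exact h1.trans (hXb j)
    have hq2ne0 : q2 ≠ 0 := (lt_of_le_of_lt (zero_le) hqq2).ne'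
    have hdcle : ∀ j k, dc j k ≤ (2:ℝ≥0∞)^(-(j:ℝ)) * L j := by
      intro j k
      refine le_trans ?_ (hXc j)
      rcases eq_or_ne q2 ∞ with h2 | h2
      · rw [h2]
        unfold lorentzNorm
        rw [if_pos rfl]
        exact le_iSup_of_le (k-1) le_rfl
      · have hrt : 0 < q2.toReal := ENNReal.toReal_pos hq2ne0 h2
        have h1 : dc j k ≤ (∑' i : ℤ, (dc j i)^q2.toReal)^(1/q2.toReal) :=
          single_le_rpow_tsum hrt _ k
        have h2s : ∑' i : ℤ, (dc j i)^q2.toReal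
            = (lorentzNorm p q2 (ntMax ψ (g1 j)))^q2.toReal := by
          rw [lorentz_rpow' hq2ne0 h2]
          exact tsum_shift (fun i : ℤ =>
            ((2:ℝ≥0∞)^(i:ℤ) * (distFn (ntMax ψ (g1 j)) ((2:ℝ≥0∞)^(i:ℤ)))^(1/p)) ^ q2.toReal)
        rwa [h2s, ← ENNReal.rpow_mul, mul_one_div_cancel hrt.ne', ENNReal.rpow_one] at h1
    have hasub : ∀ j k, a k ≤ C1 * (db j k + dc j k) := by
      intro j k
      have hzk : (2:ℝ≥0∞)^(k:ℤ) = 2 * (2:ℝ≥0∞)^(k-1:ℤ) := by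
        conv_lhs => rw [show (k:ℤ) = 1 + (k-1) by ring]
        rw [ENNReal.zpow_add two_ne_zero h2net, zpow_one]
      have hsplit : distFn F ((2:ℝ≥0∞)^(k:ℤ)) ≤
          distFn (ntMax ψ (g0 j)) ((2:ℝ≥0∞)^(k-1:ℤ))
            + distFn (ntMax ψ (g1 j)) ((2:ℝ≥0∞)^(k-1:ℤ)) := by
        unfold distFn
        refine le_trans (measure_mono ?_) (measure_union_le _ _)
        intro y hy
        have hy' : (2:ℝ≥0∞)^(k:ℤ) < F y := hy
        by_contra hcon
        simp only [mem_union, mem_setOf_eq, not_or, not_lt] at hcon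
        have hFle : F y ≤ ntMax ψ (g0 j) y + ntMax ψ (g1 j) y := by
          rw [hF]
          exact ntMax_le_add ψ f (g0 j) (g1 j) (hg0 j) (hg1 j) hψ.continuous hψc (hge j) y
        have hsum2 : F y ≤ (2:ℝ≥0∞)^(k-1:ℤ) + (2:ℝ≥0∞)^(k-1:ℤ) :=
          hFle.trans (add_le_add hcon.1 hcon.2)
        rw [← two_mul, ← hzk] at hsum2
        exact absurd hy' (not_lt.2 hsum2)
      calc a k = (2:ℝ≥0∞)^(k:ℤ) * (distFn F ((2:ℝ≥0∞)^(k:ℤ)))^(1/p) := rfl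
      _ ≤ (2:ℝ≥0∞)^(k:ℤ) * ((distFn (ntMax ψ (g0 j)) ((2:ℝ≥0∞)^(k-1:ℤ))
            + distFn (ntMax ψ (g1 j)) ((2:ℝ≥0∞)^(k-1:ℤ)))^(1/p)) :=
          mul_le_mul_right (ENNReal.rpow_le_rpow hsplit (by positivity)) _
      _ ≤ (2:ℝ≥0∞)^(k:ℤ) * ((2:ℝ≥0∞)^(1/p) * ((distFn (ntMax ψ (g0 j)) ((2:ℝ≥0∞)^(k-1:ℤ)))^(1/p)
            + (distFn (ntMax ψ (g1 j)) ((2:ℝ≥0∞)^(k-1:ℤ)))^(1/p))) :=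
          mul_le_mul_right (add_rpow_le _ _ (by positivity)) _
      _ = C1 * (db j k + dc j k) := by
          rw [hzk, hC1, ENNReal.rpow_add _ _ two_ne_zero h2net, ENNReal.rpow_one]
          simp only [hdb, hdc]
          ring
    have hafin : ∀ k, a k ≠ ∞ := by
      intro k
      have h1 := (hasub 0 k).trans (mul_le_mul_right (add_le_add (hdble 0 k) (hdcle 0 k)) C1)
      refine (lt_of_le_of_lt h1 ?_).ne
      refine ENNReal.mul_lt_top hC1top.lt_top ?_
      exact ENNReal.add_lt_top.2 ⟨(hLfin 0).lt_top,
        ENNReal.mul_lt_top (pow2_ne_top _).lt_top (hLfin 0).lt_top⟩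
    set Jk : ℤ → Set ℤ := fun k => {j | a k ≤ 2 * C1 * dc j k} with hJk
    have hdich : ∀ k j, j ∉ Jk k → a k ≤ 2 * C1 * db j k := by
      intro k j hj
      have h1 : ¬ (a k ≤ 2 * C1 * dc j k) := hj
      push_neg at h1
      have h2 : C1 * dc j k ≤ a k / 2 := by
        rw [ENNReal.le_div_iff_mul_le (Or.inl two_ne_zero) (Or.inl h2net)]
        calc C1 * dc j k * 2 = 2 * C1 * dc j k := by ring
        _ ≤ a k := h1.le
      have h3 : a k / 2 + a k / 2 ≤ C1 * db j k + a k / 2 := by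
        rw [ENNReal.add_halves]
        exact (hasub j k).trans (by rw [mul_add]; exact add_le_add le_rfl h2)
      have h4 : a k / 2 ≤ C1 * db j k :=
        (ENNReal.add_le_add_iff_right (ENNReal.div_lt_top (hafin k) two_ne_zero).ne).1 h3
      calc a k = a k / 2 * 2 := (ENNReal.div_mul_cancel two_ne_zero h2net).symm
      _ ≤ C1 * db j k * 2 := mul_le_mul_left h4 _
      _ = 2 * C1 * db j k := by ring
    set u : ℤ → ℝ≥0∞ := fun j => ((2:ℝ≥0∞)^(-(j:ℝ)*η) * L j)^q with hu
    set SL : ℝ≥0∞ := ∑' j : ℤ, u j with hSL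
    have hSLle : SL ≤ (2:ℝ≥0∞)^q * (SK + ϵ^q * M) := by
      have hterm : ∀ j : ℤ, u j ≤ (2:ℝ≥0∞)^q *
          (((2:ℝ≥0∞)^(-(j:ℝ)*η) * KD j)^q + (ϵ * w j)^q) := by
        intro j
        have he : (2:ℝ≥0∞)^(-(j:ℝ)*η) * L j = (2:ℝ≥0∞)^(-(j:ℝ)*η) * KD j + ϵ * w j := by
          rw [hLd]
          show (2:ℝ≥0∞)^(-(j:ℝ)*η) * (KD j + ϵ * (2:ℝ≥0∞)^((j:ℝ)*η) * w j) = _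
          rw [mul_add]
          congr 1
          calc (2:ℝ≥0∞)^(-(j:ℝ)*η) * (ϵ * (2:ℝ≥0∞)^((j:ℝ)*η) * w j)
              = ((2:ℝ≥0∞)^(-(j:ℝ)*η) * (2:ℝ≥0∞)^((j:ℝ)*η)) * (ϵ * w j) := by ring
          _ = ϵ * w j := by
              rw [pow2_mul, show -(j:ℝ)*η + (j:ℝ)*η = 0 by ring, ENNReal.rpow_zero, one_mul]
        have huj : u j = ((2:ℝ≥0∞)^(-(j:ℝ)*η) * L j)^q := rfl
        rw [huj, he]
        exact add_rpow_le _ _ hq.le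
      calc SL ≤ ∑' j : ℤ, (2:ℝ≥0∞)^q *
            (((2:ℝ≥0∞)^(-(j:ℝ)*η) * KD j)^q + (ϵ * w j)^q) := ENNReal.tsum_le_tsum hterm
      _ = (2:ℝ≥0∞)^q * (∑' j : ℤ,
            (((2:ℝ≥0∞)^(-(j:ℝ)*η) * KD j)^q + (ϵ * w j)^q)) := ENNReal.tsum_mul_left
      _ = (2:ℝ≥0∞)^q * (SK + ∑' j : ℤ, (ϵ * w j)^q) := by rw [ENNReal.tsum_add]
      _ ≤ (2:ℝ≥0∞)^q * (SK + ϵ^q * M) := by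
          refine mul_le_mul_right (add_le_add le_rfl ?_) _
          calc ∑' j : ℤ, (ϵ * w j)^q = ∑' j : ℤ, ϵ^q * (w j)^q :=
                tsum_congr fun j => ENNReal.mul_rpow_of_nonneg _ _ hq.le
          _ = ϵ^q * ∑' j : ℤ, (w j)^q := ENNReal.tsum_mul_left
          _ ≤ ϵ^q * M := mul_le_mul_right hwsum _
    have hSLfin : SL ≠ ∞ := by
      refine (lt_of_le_of_lt hSLle ?_).ne
      refine ENNReal.mul_lt_top (pow2_ne_top _).lt_top ?_
      refine ENNReal.add_lt_top.2 ⟨hSKfin.lt_top, ?_⟩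
      exact ENNReal.mul_lt_top (ENNReal.rpow_lt_top_of_nonneg hq.le hϵtop) hMfin.lt_top
    have hLle : ∀ j : ℤ, L j ≤ (2:ℝ≥0∞)^((j:ℝ)*η) * SL^(1/q) := by
      intro j
      have h1 : u j ≤ SL := ENNReal.le_tsum j
      have h2 : (2:ℝ≥0∞)^(-(j:ℝ)*η) * L j ≤ SL^(1/q) := by
        have h3 := ENNReal.rpow_le_rpow h1 (by positivity : (0:ℝ) ≤ 1/q)
        have hb : (u j)^(1/q) = (2:ℝ≥0∞)^(-(j:ℝ)*η) * L j := by
          show (((2:ℝ≥0∞)^(-(j:ℝ)*η) * L j)^q)^(1/q) = _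
          rw [← ENNReal.rpow_mul, mul_one_div_cancel hq', ENNReal.rpow_one]
        rwa [hb] at h3
      calc L j = (2:ℝ≥0∞)^((j:ℝ)*η) * ((2:ℝ≥0∞)^(-(j:ℝ)*η) * L j) := by
            rw [← mul_assoc, pow2_mul, show (j:ℝ)*η + -(j:ℝ)*η = 0 by ring,
              ENNReal.rpow_zero, one_mul]
      _ ≤ _ := mul_le_mul_right h2 _
    have hDfin : 2 * C1 * SL^(1/q) ≠ ∞ :=
      ENNReal.mul_ne_top (ENNReal.mul_ne_top h2net hC1top)
        (ENNReal.rpow_ne_top_of_nonneg (by positivity) hSLfin)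
    have hchainc : ∀ k j, j ∈ Jk k →
        a k ≤ (2:ℝ≥0∞)^((j:ℝ)*(η-1)) * (2*C1*SL^(1/q)) := by
      intro k j hjJ
      have h1 : a k ≤ 2*C1*dc j k := hjJ
      have h2 : dc j k ≤ (2:ℝ≥0∞)^(-(j:ℝ)) * ((2:ℝ≥0∞)^((j:ℝ)*η) * SL^(1/q)) :=
        (hdcle j k).trans (mul_le_mul_right (hLle j) _)
      calc a k ≤ 2*C1*((2:ℝ≥0∞)^(-(j:ℝ)) * ((2:ℝ≥0∞)^((j:ℝ)*η) * SL^(1/q))) :=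
            h1.trans (mul_le_mul_right h2 _)
      _ = ((2:ℝ≥0∞)^(-(j:ℝ)) * (2:ℝ≥0∞)^((j:ℝ)*η)) * (2*C1*SL^(1/q)) := by ring
      _ = (2:ℝ≥0∞)^((j:ℝ)*(η-1)) * (2*C1*SL^(1/q)) := by
          rw [pow2_mul, show -(j:ℝ) + (j:ℝ)*η = (j:ℝ)*(η-1) by ring]
    have hchainb : ∀ k j, j ∉ Jk k →
        a k ≤ (2:ℝ≥0∞)^((j:ℝ)*η) * (2*C1*SL^(1/q)) := by
      intro k j hj
      have h1 := hdich k j hj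
      have h2 : db j k ≤ (2:ℝ≥0∞)^((j:ℝ)*η) * SL^(1/q) := (hdble j k).trans (hLle j)
      calc a k ≤ 2*C1*((2:ℝ≥0∞)^((j:ℝ)*η) * SL^(1/q)) := h1.trans (mul_le_mul_right h2 _)
      _ = (2:ℝ≥0∞)^((j:ℝ)*η) * (2*C1*SL^(1/q)) := by ring
    have hdeg1 : ∀ k, ¬ BddAbove (Jk k) → a k = 0 := by
      intro k hnb
      refine le_antisymm ?_ (zero_le)
      refine ENNReal.le_of_forall_pos_le_add fun ε hε _ => ?_
      rw [zero_add]
      rcases eq_or_ne (2*C1*SL^(1/q)) 0 with hD0 | hD0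
      · obtain ⟨j, hjJ, -⟩ := not_bddAbove_iff.1 hnb 0
        have := hchainc k j hjJ
        rw [hD0, mul_zero] at this
        exact this.trans (zero_le)
      · have hDpos : 0 < (↑ε:ℝ≥0∞)/(2*C1*SL^(1/q)) :=
          ENNReal.div_pos (ENNReal.coe_ne_zero.2 hε.ne') hDfin
        obtain ⟨N, hN⟩ := exists_pow2_le hDpos (show (0:ℝ) < 1-η by linarith)
        obtain ⟨j, hjJ, hjN⟩ := not_bddAbove_iff.1 hnb (-N)
        have hradj : (2:ℝ≥0∞)^((j:ℝ)*(η-1)) ≤ (↑ε:ℝ≥0∞)/(2*C1*SL^(1/q)) := by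
          have h5 := hN (-j) (by omega)
          have he : ((-j:ℤ):ℝ) * (1-η) = (j:ℝ)*(η-1) := by push_cast; ring
          rwa [he] at h5
        calc a k ≤ ((↑ε:ℝ≥0∞)/(2*C1*SL^(1/q))) * (2*C1*SL^(1/q)) :=
              (hchainc k j hjJ).trans (mul_le_mul_left hradj _)
        _ = ↑ε := ENNReal.div_mul_cancel hD0 hDfin
    have hdeg2 : ∀ k, Jk k = ∅ → a k = 0 := by
      intro k hempty
      refine le_antisymm ?_ (zero_le)
      refine ENNReal.le_of_forall_pos_le_add fun ε hε _ => ?_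
      rw [zero_add]
      have hnot : ∀ j : ℤ, j ∉ Jk k := by rw [hempty]; exact fun j => notMem_empty j
      rcases eq_or_ne (2*C1*SL^(1/q)) 0 with hD0 | hD0
      · have := hchainb k 0 (hnot 0)
        rw [hD0, mul_zero] at this
        exact this.trans (zero_le)
      · have hDpos : 0 < (↑ε:ℝ≥0∞)/(2*C1*SL^(1/q)) :=
          ENNReal.div_pos (ENNReal.coe_ne_zero.2 hε.ne') hDfin
        obtain ⟨N, hN⟩ := exists_pow2_le hDpos hη0
        calc a k ≤ ((↑ε:ℝ≥0∞)/(2*C1*SL^(1/q))) * (2*C1*SL^(1/q)) :=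
              (hchainb k N (hnot N)).trans (mul_le_mul_left (hN N le_rfl) _)
        _ = ↑ε := ENNReal.div_mul_cancel hD0 hDfin
    set P : ℤ → Prop := fun k => (Jk k).Nonempty ∧ BddAbove (Jk k) with hP
    have hPsel : ∀ k, P k → ∃ sk : ℤ, sk ∈ Jk k ∧ ∀ z ∈ Jk k, z ≤ sk := by
      intro k hk
      obtain ⟨b, hb⟩ := hk.2
      obtain ⟨z0, hz0⟩ := hk.1
      obtain ⟨sk, hs1, hs2⟩ := Int.exists_greatest_of_bdd ⟨b, fun z hz => hb hz⟩ ⟨z0, hz0⟩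
      exact ⟨sk, hs1, fun z hz => hs2 z hz⟩
    set s : ℤ → ℤ := fun k => if hk : P k then (hPsel k hk).choose else 0 with hsdef
    have hsmem : ∀ k, (hk : P k) → s k ∈ Jk k := by
      intro k hk
      have he : s k = (hPsel k hk).choose := by rw [hsdef]; exact dif_pos hk
      rw [he]; exact (hPsel k hk).choose_spec.1
    have hsnot : ∀ k, (hk : P k) → (s k + 1) ∉ Jk k := by
      intro k hk hmem
      have he : s k = (hPsel k hk).choose := by rw [hsdef]; exact dif_pos hk
      have := (hPsel k hk).choose_spec.2 _ hmem
      omega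
    have hptn : ∀ k : ℤ, (a k)^q = ∑' j : ℤ, (if P k ∧ s k = j then (a k)^q else 0) := by
      intro k
      rcases Classical.em (P k) with hk | hk
      · rw [tsum_eq_single (s k) ?_]
        · rw [if_pos (show P k ∧ s k = s k from ⟨hk, rfl⟩)]
        · intro j hj
          simp only [ite_eq_right_iff]
          rintro ⟨-, h⟩
          exact absurd h.symm hj
      · have hak : a k = 0 := by
          rcases Classical.em (BddAbove (Jk k)) with hb | hb
          · rcases eq_empty_or_nonempty (Jk k) with he | hne
            · exact hdeg2 k he
            · exact absurd ⟨hne, hb⟩ hk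
          · exact hdeg1 k hb
        have hz : ∀ j : ℤ, (if P k ∧ s k = j then (a k)^q else 0) = 0 := by
          intro j; simp [hk]
        rw [tsum_congr hz, tsum_zero, hak, ENNReal.zero_rpow_of_pos hq]
    have hcc : (2*C1)^(η*q) * (2*C1)^((1-η)*q) = (2*C1)^q := by
      rw [← ENNReal.rpow_add_of_nonneg _ _ (mul_nonneg hη0.le hq.le)
        (mul_nonneg (by linarith) hq.le), show η*q+(1-η)*q = q by ring]
    have hslice : ∀ j : ℤ, (∑' k : ℤ, (if P k ∧ s k = j then (a k)^q else 0)) ≤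
        (2*C1)^q * (L (j+1))^((1-η)*q) * ((2:ℝ≥0∞)^(-(j:ℝ)) * L j)^(η*q) := by
      intro j
      set x : ℤ → ℝ≥0∞ := fun k => if P k ∧ s k = j then a k else 0 with hx
      have hxq : ∀ k : ℤ, (if P k ∧ s k = j then (a k)^q else 0) = (x k)^q := by
        intro k
        show _ = (if P k ∧ s k = j then a k else 0)^q
        by_cases h : P k ∧ s k = j <;> simp [h, ENNReal.zero_rpow_of_pos hq]
      rw [tsum_congr hxq]
      have hxb : ∀ k, x k ≤ 2*C1*db (j+1) k := by
        intro k
        show (if P k ∧ s k = j then a k else 0) ≤ _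
        by_cases h : P k ∧ s k = j
        · rw [if_pos h]
          have h2 := hdich k (s k + 1) (hsnot k h.1)
          rw [h.2] at h2
          exact h2
        · rw [if_neg h]; exact zero_le
      have hxc : ∀ k, x k ≤ 2*C1*dc j k := by
        intro k
        show (if P k ∧ s k = j then a k else 0) ≤ _
        by_cases h : P k ∧ s k = j
        · rw [if_pos h]
          have h2 : a k ≤ 2*C1*dc (s k) k := hsmem k h.1
          rw [h.2] at h2
          exact h2
        · rw [if_neg h]; exact zero_le
      have hsum1 : ∑' k : ℤ, (x k)^q1 ≤ (2*C1)^q1 * (L (j+1))^q1 := by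
        calc ∑' k : ℤ, (x k)^q1 ≤ ∑' k : ℤ, (2*C1*db (j+1) k)^q1 :=
              ENNReal.tsum_le_tsum fun k => ENNReal.rpow_le_rpow (hxb k) hq1.le
        _ = ∑' k : ℤ, (2*C1)^q1 * (db (j+1) k)^q1 :=
              tsum_congr fun k => ENNReal.mul_rpow_of_nonneg _ _ hq1.le
        _ = (2*C1)^q1 * ∑' k : ℤ, (db (j+1) k)^q1 := ENNReal.tsum_mul_left
        _ ≤ (2*C1)^q1 * (L (j+1))^q1 := by
              rw [hdbsum (j+1)]
              exact mul_le_mul_right (ENNReal.rpow_le_rpow (hXb (j+1)) hq1.le) _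
      rcases eq_or_ne q2 ∞ with h2top | h2top
      · have hq1e : q1 = (1-η)*q := by
          rw [if_pos h2top, add_zero, div_eq_div_iff hq.ne' hq1.ne'] at hηdef
          linarith
        have hxcs : ∀ k, x k ≤ 2*C1*((2:ℝ≥0∞)^(-(j:ℝ)) * L j) := fun k =>
          (hxc k).trans (mul_le_mul_right (hdcle j k) _)
        calc ∑' k : ℤ, (x k)^q
            = ∑' k : ℤ, (x k)^q1 * (x k)^(η*q) := by
              refine tsum_congr fun k => ?_
              rw [← ENNReal.rpow_add_of_nonneg q1 (η*q) hq1.le (mul_nonneg hη0.le hq.le)]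
              congr 1
              rw [hq1e]; ring
        _ ≤ ∑' k : ℤ, (x k)^q1 * (2*C1*((2:ℝ≥0∞)^(-(j:ℝ)) * L j))^(η*q) :=
              ENNReal.tsum_le_tsum fun k =>
                mul_le_mul_right (ENNReal.rpow_le_rpow (hxcs k)
                  (mul_nonneg hη0.le hq.le)) _
        _ = (2*C1*((2:ℝ≥0∞)^(-(j:ℝ)) * L j))^(η*q) * ∑' k : ℤ, (x k)^q1 := by
              rw [ENNReal.tsum_mul_right, mul_comm]
        _ ≤ (2*C1*((2:ℝ≥0∞)^(-(j:ℝ)) * L j))^(η*q) * ((2*C1)^q1 * (L (j+1))^q1) :=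
              mul_le_mul_right hsum1 _
        _ = (2*C1)^q * (L (j+1))^((1-η)*q) * ((2:ℝ≥0∞)^(-(j:ℝ)) * L j)^(η*q) := by
              rw [hq1e, ENNReal.mul_rpow_of_nonneg (2*C1) _ (mul_nonneg hη0.le hq.le)]
              calc ((2*C1)^(η*q) * ((2:ℝ≥0∞)^(-(j:ℝ)) * L j)^(η*q))
                    * ((2*C1)^((1-η)*q) * (L (j+1))^((1-η)*q))
                  = ((2*C1)^(η*q) * (2*C1)^((1-η)*q))
                    * ((L (j+1))^((1-η)*q) * ((2:ℝ≥0∞)^(-(j:ℝ)) * L j)^(η*q)) := by ring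
              _ = (2*C1)^q * (L (j+1))^((1-η)*q) * ((2:ℝ≥0∞)^(-(j:ℝ)) * L j)^(η*q) := by
                  rw [hcc]; ring
      · -- Hölder case
        have hq2r : 0 < q2.toReal := ENNReal.toReal_pos hq2ne0 h2top
        rw [if_neg h2top] at hηdef
        have hηq2 : η/q2.toReal < 1/q := by
          rw [hηdef]
          have : 0 < (1-η)/q1 := div_pos (by linarith) hq1
          linarith
        have hη1q : (1-η)/q1 < 1/q := by
          rw [hηdef]
          have : 0 < η/q2.toReal := div_pos hη0 hq2r
          linarith
        have hr1 : (1-η)*q < q1 := by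
          rw [div_lt_div_iff₀ hq1 hq] at hη1q
          linarith
        have hr2 : η*q < q2.toReal := by
          rw [div_lt_div_iff₀ hq2r hq] at hηq2
          linarith
        have h1ηq : (0:ℝ) < (1-η)*q := mul_pos (by linarith) hq
        have hηqpos : (0:ℝ) < η*q := mul_pos hη0 hq
        have hconj : Real.HolderConjugate (q1/((1-η)*q)) (q2.toReal/(η*q)) := by
          rw [Real.holderConjugate_iff]
          constructor
          · rw [lt_div_iff₀ h1ηq]; linarith
          · rw [inv_div, inv_div]
            rw [div_add_div _ _ hq1.ne' hq2r.ne']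
            rw [div_eq_one_iff_eq (by positivity)]
            have hd := hηdef
            field_simp at hd ⊢
            nlinarith [hd]
        have hH := tsum_holder hconj (fun k => (x k)^((1-η)*q)) (fun k => (x k)^(η*q))
        have hfe : ∀ k : ℤ, ((x k)^((1-η)*q))^(q1/((1-η)*q)) = (x k)^q1 := by
          intro k
          rw [← ENNReal.rpow_mul, mul_div_cancel₀ _ h1ηq.ne']
        have hge2 : ∀ k : ℤ, ((x k)^(η*q))^(q2.toReal/(η*q)) = (x k)^q2.toReal := by
          intro k
          rw [← ENNReal.rpow_mul, mul_div_cancel₀ _ hηqpos.ne']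
        simp only [hfe, hge2] at hH
        have hLHS : ∀ k : ℤ, (x k)^((1-η)*q) * (x k)^(η*q) = (x k)^q := by
          intro k
          rw [← ENNReal.rpow_add_of_nonneg _ _ h1ηq.le hηqpos.le,
            show (1-η)*q + η*q = q by ring]
        have hsum2 : ∑' k : ℤ, (x k)^q2.toReal
            ≤ (2*C1)^q2.toReal * ((2:ℝ≥0∞)^(-(j:ℝ)) * L j)^q2.toReal := by
          calc ∑' k : ℤ, (x k)^q2.toReal ≤ ∑' k : ℤ, (2*C1*dc j k)^q2.toReal :=
                ENNReal.tsum_le_tsum fun k => ENNReal.rpow_le_rpow (hxc k) hq2r.le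
          _ = ∑' k : ℤ, (2*C1)^q2.toReal * (dc j k)^q2.toReal :=
                tsum_congr fun k => ENNReal.mul_rpow_of_nonneg _ _ hq2r.le
          _ = (2*C1)^q2.toReal * ∑' k : ℤ, (dc j k)^q2.toReal := ENNReal.tsum_mul_left
          _ ≤ (2*C1)^q2.toReal * ((2:ℝ≥0∞)^(-(j:ℝ)) * L j)^q2.toReal := by
                have h2s : ∑' i : ℤ, (dc j i)^q2.toReal
                    = (lorentzNorm p q2 (ntMax ψ (g1 j)))^q2.toReal := by
                  rw [lorentz_rpow' hq2ne0 h2top]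
                  exact tsum_shift (fun i : ℤ =>
                    ((2:ℝ≥0∞)^(i:ℤ) * (distFn (ntMax ψ (g1 j)) ((2:ℝ≥0∞)^(i:ℤ)))^(1/p))
                      ^ q2.toReal)
                rw [h2s]
                exact mul_le_mul_right (ENNReal.rpow_le_rpow (hXc j) hq2r.le) _
        calc ∑' k : ℤ, (x k)^q = ∑' k : ℤ, (x k)^((1-η)*q) * (x k)^(η*q) :=
              tsum_congr fun k => (hLHS k).symm
        _ ≤ (∑' k : ℤ, (x k)^q1)^(1/(q1/((1-η)*q)))
              * (∑' k : ℤ, (x k)^q2.toReal)^(1/(q2.toReal/(η*q))) := hH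
        _ ≤ ((2*C1)^q1 * (L (j+1))^q1)^(1/(q1/((1-η)*q)))
              * ((2*C1)^q2.toReal * ((2:ℝ≥0∞)^(-(j:ℝ)) * L j)^q2.toReal)^(1/(q2.toReal/(η*q))) := by
              gcongr
        _ = (2*C1)^q * (L (j+1))^((1-η)*q) * ((2:ℝ≥0∞)^(-(j:ℝ)) * L j)^(η*q) := by
              rw [one_div_div, one_div_div,
                ENNReal.mul_rpow_of_nonneg _ _ (by positivity : (0:ℝ) ≤ (1-η)*q/q1),
                ENNReal.mul_rpow_of_nonneg _ _ (by positivity : (0:ℝ) ≤ η*q/q2.toReal),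
                ← ENNReal.rpow_mul, ← ENNReal.rpow_mul, ← ENNReal.rpow_mul,
                ← ENNReal.rpow_mul,
                show q1 * ((1-η)*q/q1) = (1-η)*q by field_simp,
                show q2.toReal * (η*q/q2.toReal) = η*q by field_simp]
              calc ((2*C1)^((1-η)*q) * (L (j+1))^((1-η)*q))
                    * ((2*C1)^(η*q) * ((2:ℝ≥0∞)^(-(j:ℝ)) * L j)^(η*q))
                  = ((2*C1)^(η*q) * (2*C1)^((1-η)*q))
                    * ((L (j+1))^((1-η)*q) * ((2:ℝ≥0∞)^(-(j:ℝ)) * L j)^(η*q)) := by ring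
              _ = _ := by rw [hcc]; ring
    -- sum the slices
    have hterm2 : ∀ j : ℤ, (2*C1)^q * (L (j+1))^((1-η)*q) * ((2:ℝ≥0∞)^(-(j:ℝ)) * L j)^(η*q)
        = (2*C1)^q * (2:ℝ≥0∞)^(η*(1-η)*q) * ((u (j+1))^(1-η) * (u j)^η) := by
      intro j
      have hLu : ∀ i : ℤ, L i = (2:ℝ≥0∞)^((i:ℝ)*η) * (u i)^(1/q) := by
        intro i
        have hb : (u i)^(1/q) = (2:ℝ≥0∞)^(-(i:ℝ)*η) * L i := by
          show (((2:ℝ≥0∞)^(-(i:ℝ)*η) * L i)^q)^(1/q) = _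
          rw [← ENNReal.rpow_mul, mul_one_div_cancel hq', ENNReal.rpow_one]
        rw [hb, ← mul_assoc, pow2_mul, show (i:ℝ)*η + -(i:ℝ)*η = 0 by ring,
          ENNReal.rpow_zero, one_mul]
      rw [hLu (j+1), hLu j]
      rw [ENNReal.mul_rpow_of_nonneg _ _ (mul_nonneg (by linarith : (0:ℝ) ≤ 1-η) hq.le),
        ENNReal.mul_rpow_of_nonneg ((2:ℝ≥0∞)^(-(j:ℝ)))
          (((2:ℝ≥0∞)^((j:ℝ)*η)) * (u j)^(1/q)) (mul_nonneg hη0.le hq.le),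
        ENNReal.mul_rpow_of_nonneg _ _ (mul_nonneg hη0.le hq.le)]
      rw [← ENNReal.rpow_mul (2:ℝ≥0∞) (((j+1:ℤ):ℝ)*η),
        ← ENNReal.rpow_mul (2:ℝ≥0∞) (-(j:ℝ)),
        ← ENNReal.rpow_mul (2:ℝ≥0∞) ((j:ℝ)*η),
        ← ENNReal.rpow_mul (u (j+1)), ← ENNReal.rpow_mul (u j)]
      rw [show 1/q*((1-η)*q) = 1-η by field_simp,
        show 1/q*(η*q) = η by field_simp]
      rw [show ((j+1:ℤ):ℝ)*η*((1-η)*q) = ((j:ℝ)+1)*η*((1-η)*q) by push_cast; ring]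
      calc (2*C1)^q * ((2:ℝ≥0∞)^(((j:ℝ)+1)*η*((1-η)*q)) * (u (j+1))^(1-η))
            * ((2:ℝ≥0∞)^(-(j:ℝ)*(η*q)) * ((2:ℝ≥0∞)^((j:ℝ)*η*(η*q)) * (u j)^η))
          = (2*C1)^q * (((2:ℝ≥0∞)^(((j:ℝ)+1)*η*((1-η)*q)) * (2:ℝ≥0∞)^(-(j:ℝ)*(η*q))
            * (2:ℝ≥0∞)^((j:ℝ)*η*(η*q))) * ((u (j+1))^(1-η) * (u j)^η)) := by ring
      _ = (2*C1)^q * ((2:ℝ≥0∞)^(η*(1-η)*q) * ((u (j+1))^(1-η) * (u j)^η)) := by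
          rw [pow2_mul, pow2_mul,
            show ((j:ℝ)+1)*η*((1-η)*q) + -(j:ℝ)*(η*q) + (j:ℝ)*η*(η*q) = η*(1-η)*q by ring]
      _ = _ := by ring
    have hjH : ∑' j : ℤ, (u (j+1))^(1-η) * (u j)^η ≤ SL := by
      have hconj2 : Real.HolderConjugate (1/(1-η)) (1/η) := by
        rw [Real.holderConjugate_iff]
        constructor
        · rw [lt_div_iff₀ (by linarith : (0:ℝ) < 1-η)]; linarith
        · rw [one_div, inv_inv, one_div, inv_inv]; ring
      have hH2 := tsum_holder hconj2 (fun j => (u (j+1))^(1-η)) (fun j => (u j)^η)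
      have he1 : ∀ j : ℤ, ((u (j+1))^(1-η))^(1/(1-η)) = u (j+1) := by
        intro j
        rw [← ENNReal.rpow_mul, mul_one_div_cancel (by linarith : (1:ℝ)-η ≠ 0),
          ENNReal.rpow_one]
      have he2 : ∀ j : ℤ, ((u j)^η)^(1/η) = u j := by
        intro j
        rw [← ENNReal.rpow_mul, mul_one_div_cancel hη0.ne', ENNReal.rpow_one]
      simp only [he1, he2] at hH2
      have he3 : ∑' j : ℤ, u (j+1) = SL := by
        rw [hSL]
        exact (Equiv.addRight (1:ℤ)).tsum_eq u
      have he4 : (1:ℝ)/(1/(1-η)) = 1-η := by field_simp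
      have he5 : (1:ℝ)/(1/η) = η := by field_simp
      rw [he3, he4, he5] at hH2
      calc ∑' j : ℤ, (u (j+1))^(1-η) * (u j)^η ≤ SL^(1-η) * SL^η := hH2
      _ = SL := by
          rw [← ENNReal.rpow_add_of_nonneg _ _ (by linarith : (0:ℝ) ≤ 1-η) hη0.le,
            show (1:ℝ)-η+η = 1 by ring, ENNReal.rpow_one]
    -- put everything together
    calc ∑' k : ℤ, (a k)^q
        = ∑' k : ℤ, ∑' j : ℤ, (if P k ∧ s k = j then (a k)^q else 0) := tsum_congr hptn
    _ = ∑' j : ℤ, ∑' k : ℤ, (if P k ∧ s k = j then (a k)^q else 0) := ENNReal.tsum_comm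
    _ ≤ ∑' j : ℤ, (2*C1)^q * (L (j+1))^((1-η)*q) * ((2:ℝ≥0∞)^(-(j:ℝ)) * L j)^(η*q) :=
          ENNReal.tsum_le_tsum hslice
    _ = ∑' j : ℤ, (2*C1)^q * (2:ℝ≥0∞)^(η*(1-η)*q) * ((u (j+1))^(1-η) * (u j)^η) :=
          tsum_congr hterm2
    _ = (2*C1)^q * (2:ℝ≥0∞)^(η*(1-η)*q) * ∑' j : ℤ, (u (j+1))^(1-η) * (u j)^η := by
          rw [← ENNReal.tsum_mul_left]
    _ ≤ (2*C1)^q * (2:ℝ≥0∞)^(η*(1-η)*q) * SL := mul_le_mul_right hjH _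
    _ ≤ (2*C1)^q * (2:ℝ≥0∞)^(η*(1-η)*q) * ((2:ℝ≥0∞)^q * (SK + ϵ^q * M)) :=
          mul_le_mul_right hSLle _
    _ = C2 * (SK + ϵ^q * M) := by rw [hC2]; ring
  -- pass to the limit ϵ → 0
  have hmain : ∑' k : ℤ, (a k)^q ≤ C3 * I := by
    have h1 : ∑' k : ℤ, (a k)^q ≤ C2 * SK := by
      refine ENNReal.le_of_forall_pos_le_add fun ε hε hfin => ?_
      set ϵ : ℝ≥0∞ := ((↑ε:ℝ≥0∞) / (C2 * M + 1)) ^ (1/q) ⊓ 1 with hϵ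
      have hden0 : C2 * M + 1 ≠ 0 := by simp
      have hdent : C2 * M + 1 ≠ ∞ := by
        simp [ENNReal.add_eq_top, ENNReal.mul_eq_top, hC2top, hMfin]
      have hϵ0 : 0 < ϵ := by
        rw [hϵ, lt_min_iff]
        refine ⟨ENNReal.rpow_pos (ENNReal.div_pos (ENNReal.coe_ne_zero.2 hε.ne') hdent) ?_, one_pos⟩
        exact (ENNReal.div_lt_top ENNReal.coe_ne_top hden0).ne
      have hϵtop : ϵ ≠ ∞ := ((min_le_right _ _).trans_lt one_lt_top).ne
      have hc := core ϵ hϵ0 hϵtop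
      refine hc.trans ?_
      rw [mul_add]
      refine add_le_add le_rfl ?_
      have hϵq : ϵ^q ≤ (↑ε:ℝ≥0∞) / (C2 * M + 1) := by
        calc ϵ^q ≤ (((↑ε:ℝ≥0∞)/(C2*M+1))^(1/q))^q :=
              ENNReal.rpow_le_rpow (min_le_left _ _) hq.le
        _ = (↑ε:ℝ≥0∞)/(C2*M+1) := by
            rw [← ENNReal.rpow_mul, one_div_mul_cancel hq', ENNReal.rpow_one]
      calc C2 * (ϵ^q * M) ≤ C2 * (((↑ε:ℝ≥0∞)/(C2*M+1)) * M) := by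
            exact mul_le_mul_right (mul_le_mul_left hϵq _) _
      _ = (C2 * M) * ((↑ε:ℝ≥0∞)/(C2*M+1)) := by ring
      _ ≤ (C2 * M + 1) * ((↑ε:ℝ≥0∞)/(C2*M+1)) := mul_le_mul_left le_self_add _
      _ = ↑ε := by rw [mul_comm]; exact ENNReal.div_mul_cancel hden0 hdent
    calc ∑' k : ℤ, (a k)^q ≤ C2 * SK := h1
    _ ≤ C2 * ((2:ℝ≥0∞)^(η*q+1) * I) := mul_le_mul_right hSKI _
    _ = C3 * I := by rw [hC3]; ring
  -- conclusion
  have hlor : lorentzNorm p (ENNReal.ofReal q) F = (∑' k : ℤ, (a k)^q)^(1/q) := by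
    have := lorentz_rpow (n := n) (p := p) hq F
    calc lorentzNorm p (ENNReal.ofReal q) F
        = ((lorentzNorm p (ENNReal.ofReal q) F)^q)^(1/q) := by
          rw [← ENNReal.rpow_mul, mul_one_div_cancel hq', ENNReal.rpow_one]
    _ = (∑' k : ℤ, (a k)^q)^(1/q) := by rw [this]
  rw [hlor]
  calc (∑' k : ℤ, (a k)^q)^(1/q) ≤ (C3 * I)^(1/q) :=
        ENNReal.rpow_le_rpow hmain (by positivity)
  _ = C3^(1/q) * I^(1/q) := ENNReal.mul_rpow_of_nonneg _ _ (by positivity)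
  _ ≤ ENNReal.ofReal ((C3^(1/q)).toReal + 1) * I^(1/q) := by
      refine mul_le_mul_left ?_ _
      have hfin : C3^(1/q) ≠ ∞ := ENNReal.rpow_ne_top_of_nonneg (by positivity) hC3top
      rw [ENNReal.ofReal_add ENNReal.toReal_nonneg zero_le_one, ENNReal.ofReal_toReal hfin]
      exact le_self_add

end
end
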